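/- arXiv:2112.11144 — 3 statements merged into one kernel-verified Lean document; each statement's English description precedes it below -/
import Mathlib

section
/- Let a ≤ b and a < c ≤ d be positive integers. Then there exists n₀ such that for every n ≥ n₀, ex(n, S_{a,b}, S_{c,d}) = N(S_{a,b}, K_{c,n−c}). -/
open SimpleGraph Finset

open scoped Classical

noncomputable def copyCount {α β : Type*} (H : SimpleGraph α) (G : SimpleGraph β) : ℕ :=
  Set.ncard {G' : G.Subgraph | Nonempty (H ≃g G'.coe)}

def Contains {α β : Type*} (F : SimpleGraph α) (G : SimpleGraph β) : Prop :=
  ∃ f : F →g G, Function.Injective f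

noncomputable def exGen {α β : Type*} (n : ℕ) (H : SimpleGraph α) (F : SimpleGraph β) : ℕ :=
  sSup {N | ∃ G : SimpleGraph (Fin n), ¬ Contains F G ∧ N = copyCount H G}

def doubleStar (a b : ℕ) : SimpleGraph (Fin (a + b + 2)) :=
  SimpleGraph.fromRel (fun x y =>
    (x.val = 0 ∧ y.val = 1) ∨ (x.val = 0 ∧ 2 ≤ y.val ∧ y.val < a + 2) ∨
      (x.val = 1 ∧ a + 2 ≤ y.val))

namespace DS

variable {V : Type*} [Fintype V] [DecidableEq V]

/-- the adjacency pattern of a double-star with centers u,v and leaf sets A,B -/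
def pat (u v : V) (A B : Finset V) (x y : V) : Prop :=
  (x = u ∧ y = v) ∨ (x = v ∧ y = u) ∨ (x = u ∧ y ∈ A) ∨ (x ∈ A ∧ y = u) ∨
    (x = v ∧ y ∈ B) ∨ (x ∈ B ∧ y = v)

lemma pat_symm {u v : V} {A B : Finset V} {x y : V} (h : pat u v A B x y) :
    pat u v A B y x := by unfold pat at *; tauto

/-- configurations: ordered central edge (u,v) plus leaf sets A (at u) and B (at v) -/
noncomputable def conf (G : SimpleGraph V) (a b : ℕ) :
    Finset (V × V × Finset V × Finset V) :=
  Finset.univ.filter (fun t => G.Adj t.1 t.2.1 ∧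
    t.2.2.1 ⊆ (G.neighborFinset t.1).erase t.2.1 ∧ t.2.2.1.card = a ∧
    t.2.2.2 ⊆ (G.neighborFinset t.2.1).erase t.1 ∧ t.2.2.2.card = b ∧
    Disjoint t.2.2.1 t.2.2.2)

lemma mem_conf {G : SimpleGraph V} {a b : ℕ} {u v : V} {A B : Finset V} :
    (u, v, A, B) ∈ conf G a b ↔ G.Adj u v ∧
      A ⊆ (G.neighborFinset u).erase v ∧ A.card = a ∧
      B ⊆ (G.neighborFinset v).erase u ∧ B.card = b ∧ Disjoint A B := by
  simp [conf]

/-- basic distinctness facts from a configuration -/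
lemma conf_facts {G : SimpleGraph V} {a b : ℕ} {u v : V} {A B : Finset V}
    (h : (u, v, A, B) ∈ conf G a b) :
    G.Adj u v ∧ u ≠ v ∧ u ∉ A ∧ v ∉ A ∧ u ∉ B ∧ v ∉ B ∧ (∀ x ∈ A, x ∉ B) ∧
      (∀ x ∈ A, G.Adj u x) ∧ (∀ x ∈ B, G.Adj v x) := by
  rw [mem_conf] at h
  obtain ⟨hadj, hA, _, hB, _, hdisj⟩ := h
  have hAu : ∀ x ∈ A, G.Adj u x ∧ x ≠ v := by
    intro x hx
    have := hA hx
    rw [Finset.mem_erase, SimpleGraph.mem_neighborFinset] at this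
    exact ⟨this.2, this.1⟩
  have hBv : ∀ x ∈ B, G.Adj v x ∧ x ≠ u := by
    intro x hx
    have := hB hx
    rw [Finset.mem_erase, SimpleGraph.mem_neighborFinset] at this
    exact ⟨this.2, this.1⟩
  refine ⟨hadj, hadj.ne, ?_, ?_, ?_, ?_, ?_, fun x hx => (hAu x hx).1,
    fun x hx => (hBv x hx).1⟩
  · intro hu; exact (hAu u hu).1.ne rfl
  · intro hv; exact (hAu v hv).2 rfl
  · intro hu; exact (hBv u hu).2 rfl
  · intro hv; exact (hBv v hv).1.ne rfl
  · exact fun x hx hx' => (Finset.disjoint_left.mp hdisj) hx hx'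

end DS

namespace DS
set_option linter.unusedSectionVars false

variable {V : Type*} [Fintype V] [DecidableEq V]

section verts
variable {a b : ℕ}

def w0 : Fin (a + b + 2) := ⟨0, by omega⟩
def w1 : Fin (a + b + 2) := ⟨1, by omega⟩
def la (i : Fin a) : Fin (a + b + 2) := ⟨i.1 + 2, by omega⟩
def lb (j : Fin b) : Fin (a + b + 2) := ⟨a + 2 + j.1, by omega⟩

lemma la_inj : Function.Injective (la (a := a) (b := b)) := by
  intro i j h; simp [la, Fin.ext_iff] at h ⊢; omega

lemma lb_inj : Function.Injective (lb (a := a) (b := b)) := by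
  intro i j h; simp [lb, Fin.ext_iff] at h ⊢; omega

lemma fin_cases4 (x : Fin (a + b + 2)) :
    x = w0 ∨ x = w1 ∨ (∃ i : Fin a, x = la i) ∨ (∃ j : Fin b, x = lb j) := by
  have hx := x.isLt
  rcases Nat.lt_or_ge x.1 2 with h | h
  · rcases Nat.lt_or_ge x.1 1 with h1 | h1
    · left; simp only [w0, Fin.ext_iff]; omega
    · right; left; simp [w1, Fin.ext_iff]; omega
  · rcases Nat.lt_or_ge x.1 (a + 2) with h2 | h2
    · right; right; left
      exact ⟨⟨x.1 - 2, by omega⟩, by simp [la, Fin.ext_iff]; omega⟩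
    · right; right; right
      exact ⟨⟨x.1 - (a + 2), by omega⟩, by simp [lb, Fin.ext_iff]; omega⟩

lemma ds_adj_01 : (doubleStar a b).Adj w0 w1 := by
  simp only [doubleStar, SimpleGraph.fromRel_adj, w0, w1, Fin.ext_iff]; simp

lemma ds_adj_0la (i : Fin a) : (doubleStar a b).Adj w0 (la i) := by
  have := i.isLt
  simp only [doubleStar, SimpleGraph.fromRel_adj, w0, la, Fin.ext_iff] <;> simp <;> omega

lemma ds_adj_1lb (j : Fin b) : (doubleStar a b).Adj w1 (lb j) := by
  have := j.isLt
  simp only [doubleStar, SimpleGraph.fromRel_adj, w1, lb, Fin.ext_iff] <;> simp <;> omega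

lemma ds_adj_iff {p q : Fin (a + b + 2)} :
    (doubleStar a b).Adj p q ↔ p ≠ q ∧
      ((p.1 = 0 ∧ q.1 = 1) ∨ (p.1 = 0 ∧ 2 ≤ q.1 ∧ q.1 < a + 2) ∨
        (p.1 = 1 ∧ a + 2 ≤ q.1) ∨
       (q.1 = 0 ∧ p.1 = 1) ∨ (q.1 = 0 ∧ 2 ≤ p.1 ∧ p.1 < a + 2) ∨
        (q.1 = 1 ∧ a + 2 ≤ p.1)) := by
  rw [doubleStar, SimpleGraph.fromRel_adj]
  constructor
  · rintro ⟨hne, h⟩; exact ⟨hne, by tauto⟩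
  · rintro ⟨hne, h⟩; exact ⟨hne, by tauto⟩

end verts

section maps

variable {G : SimpleGraph V} {a b : ℕ} {u v : V} {A B : Finset V}

/-- The standard injective map realizing a configuration as a double star. -/
lemma exists_std_map (h : (u, v, A, B) ∈ conf G a b) :
    ∃ f : Fin (a + b + 2) → V, Function.Injective f ∧
      f w0 = u ∧ f w1 = v ∧ (∀ i, f (la i) ∈ A) ∧ (∀ j, f (lb j) ∈ B) ∧
      (∀ x ∈ A, ∃ i, f (la i) = x) ∧ (∀ x ∈ B, ∃ j, f (lb j) = x) := by
  obtain ⟨hadj, hca, hcb⟩ : G.Adj u v ∧ A.card = a ∧ B.card = b := by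
    rw [mem_conf] at h; exact ⟨h.1, h.2.2.1, h.2.2.2.2.1⟩
  obtain ⟨-, hne, huA, hvA, huB, hvB, hAB, -, -⟩ := conf_facts h
  set eA : Fin a → V := fun i => (A.equivFin.symm (finCongr hca.symm i) : V) with heA
  set eB : Fin b → V := fun j => (B.equivFin.symm (finCongr hcb.symm j) : V) with heB
  have heAmem : ∀ i, eA i ∈ A := fun i => (A.equivFin.symm _).2
  have heBmem : ∀ j, eB j ∈ B := fun j => (B.equivFin.symm _).2
  have heAinj : Function.Injective eA :=
    Subtype.coe_injective.comp (A.equivFin.symm.injective.comp (finCongr hca.symm).injective)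
  have heBinj : Function.Injective eB :=
    Subtype.coe_injective.comp (B.equivFin.symm.injective.comp (finCongr hcb.symm).injective)
  have heAsurj : ∀ x ∈ A, ∃ i, eA i = x := by
    intro x hx
    exact ⟨finCongr hca (A.equivFin ⟨x, hx⟩), by simp [heA]⟩
  have heBsurj : ∀ x ∈ B, ∃ j, eB j = x := by
    intro x hx
    exact ⟨finCongr hcb (B.equivFin ⟨x, hx⟩), by simp [heB]⟩
  set f : Fin (a + b + 2) → V := fun x =>
    if h0 : x.1 = 0 then u else if h1 : x.1 = 1 then v
    else if hlt : x.1 < a + 2 then eA ⟨x.1 - 2, by omega⟩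
    else eB ⟨x.1 - (a + 2), by have := x.isLt; omega⟩ with hf
  have ev0 : f w0 = u := by simp [hf, w0]
  have ev1 : f w1 = v := by simp [hf, w1]
  have evA : ∀ i : Fin a, f (la i) = eA i := by
    intro i
    have hi := i.isLt
    have h0 : (la (b := b) i).1 = i.1 + 2 := rfl
    rw [hf]
    simp only [h0]
    rw [dif_neg (by omega), dif_neg (by omega), dif_pos (by omega)]
    congr 1
    all_goals exact Fin.ext (by simp only [Fin.val_mk]; omega)
  have evB : ∀ j : Fin b, f (lb j) = eB j := by
    intro j
    have hj := j.isLt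
    have h0 : (lb (a := a) j).1 = a + 2 + j.1 := rfl
    rw [hf]
    simp only [h0]
    rw [dif_neg (by omega), dif_neg (by omega), dif_neg (by omega)]
    congr 1
    all_goals exact Fin.ext (by simp only [Fin.val_mk]; omega)
  have hclass : ∀ x : Fin (a + b + 2),
      (x = w0 ∧ f x = u) ∨ (x = w1 ∧ f x = v) ∨ (∃ i, x = la i ∧ f x = eA i) ∨
        (∃ j, x = lb j ∧ f x = eB j) := by
    intro x
    rcases fin_cases4 x with h | h | ⟨i, h⟩ | ⟨j, h⟩
    · exact Or.inl ⟨h, h ▸ ev0⟩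
    · exact Or.inr (Or.inl ⟨h, h ▸ ev1⟩)
    · exact Or.inr (Or.inr (Or.inl ⟨i, h, h ▸ evA i⟩))
    · exact Or.inr (Or.inr (Or.inr ⟨j, h, h ▸ evB j⟩))
  have hinj : Function.Injective f := by
    intro x y hxy
    rcases hclass x with ⟨hx, hfx⟩ | ⟨hx, hfx⟩ | ⟨i, hx, hfx⟩ | ⟨i, hx, hfx⟩ <;>
      rcases hclass y with ⟨hy, hfy⟩ | ⟨hy, hfy⟩ | ⟨i', hy, hfy⟩ | ⟨i', hy, hfy⟩ <;>
      rw [hfx, hfy] at hxy <;> subst hx <;> subst hy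
    · rfl
    · exact absurd hxy hne
    · exact absurd (hxy ▸ heAmem i') huA
    · exact absurd (hxy ▸ heBmem i') huB
    · exact absurd hxy.symm hne
    · rfl
    · exact absurd (hxy ▸ heAmem i') hvA
    · exact absurd (hxy ▸ heBmem i') hvB
    · exact absurd (hxy.symm ▸ heAmem i) huA
    · exact absurd (hxy.symm ▸ heAmem i) hvA
    · exact congrArg la (heAinj hxy)
    · exact absurd (hxy ▸ heBmem i') (hAB _ (heAmem i))
    · exact absurd (hxy.symm ▸ heBmem i) huB
    · exact absurd (hxy.symm ▸ heBmem i) hvB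
    · exact absurd (hxy.symm ▸ heAmem i') (fun hm => hAB _ hm (heBmem i))
    · exact congrArg lb (heBinj hxy)
  refine ⟨f, hinj, ev0, ev1, fun i => (evA i) ▸ heAmem i, fun j => (evB j) ▸ heBmem j,
    ?_, ?_⟩
  · intro x hx
    obtain ⟨i, hi⟩ := heAsurj x hx
    exact ⟨i, by rw [evA i, hi]⟩
  · intro x hx
    obtain ⟨j, hj⟩ := heBsurj x hx
    exact ⟨j, by rw [evB j, hj]⟩

lemma pat_imp_adj (h : (u, v, A, B) ∈ conf G a b) {x y : V}
    (hp : pat u v A B x y) : G.Adj x y := by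
  obtain ⟨hadj, hne, huA, hvA, huB, hvB, hAB, hAu, hBv⟩ := conf_facts h
  rcases hp with ⟨rfl, rfl⟩ | ⟨rfl, rfl⟩ | ⟨rfl, hy⟩ | ⟨hx, rfl⟩ | ⟨rfl, hy⟩ | ⟨hx, rfl⟩
  · exact hadj
  · exact hadj.symm
  · exact hAu _ hy
  · exact (hAu _ hx).symm
  · exact hBv _ hy
  · exact (hBv _ hx).symm

lemma map_mem_char (h : (u, v, A, B) ∈ conf G a b) {f : Fin (a + b + 2) → V}
    (hinj : Function.Injective f) (h0 : f w0 = u) (h1 : f w1 = v)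
    (hA : ∀ i, f (la i) ∈ A) (hB : ∀ j, f (lb j) ∈ B)
    (hAs : ∀ x ∈ A, ∃ i, f (la i) = x) (hBs : ∀ x ∈ B, ∃ j, f (lb j) = x) :
    (∀ x, f x = u ↔ x = w0) ∧ (∀ x, f x = v ↔ x = w1) ∧
      (∀ x, f x ∈ A ↔ ∃ i, x = la i) ∧ (∀ x, f x ∈ B ↔ ∃ j, x = lb j) := by
  obtain ⟨hadj, hne, huA, hvA, huB, hvB, hAB, hAu, hBv⟩ := conf_facts h
  refine ⟨fun x => ⟨fun hx => ?_, fun hx => hx ▸ h0⟩,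
    fun x => ⟨fun hx => ?_, fun hx => hx ▸ h1⟩,
    fun x => ⟨fun hx => ?_, fun ⟨i, hi⟩ => hi ▸ hA i⟩,
    fun x => ⟨fun hx => ?_, fun ⟨j, hj⟩ => hj ▸ hB j⟩⟩
  · rcases fin_cases4 x with rfl | rfl | ⟨i, rfl⟩ | ⟨j, rfl⟩
    · rfl
    · exact absurd (h1.symm.trans hx) (Ne.symm hne)
    · exact absurd (hx ▸ hA i) huA
    · exact absurd (hx ▸ hB j) huB
  · rcases fin_cases4 x with rfl | rfl | ⟨i, rfl⟩ | ⟨j, rfl⟩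
    · rw [h0] at hx; exact absurd hx hne
    · rfl
    · exact absurd (hx ▸ hA i) hvA
    · exact absurd (hx ▸ hB j) hvB
  · rcases fin_cases4 x with rfl | rfl | ⟨i, rfl⟩ | ⟨j, rfl⟩
    · rw [h0] at hx; exact absurd hx huA
    · rw [h1] at hx; exact absurd hx hvA
    · exact ⟨i, rfl⟩
    · exact absurd (hB j) (hAB _ hx)
  · rcases fin_cases4 x with rfl | rfl | ⟨i, rfl⟩ | ⟨j, rfl⟩
    · rw [h0] at hx; exact absurd hx huB
    · rw [h1] at hx; exact absurd hx hvB
    · exact absurd hx (hAB _ (hA i))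
    · exact ⟨j, rfl⟩

lemma map_pat_iff (h : (u, v, A, B) ∈ conf G a b) {f : Fin (a + b + 2) → V}
    (hinj : Function.Injective f) (h0 : f w0 = u) (h1 : f w1 = v)
    (hA : ∀ i, f (la i) ∈ A) (hB : ∀ j, f (lb j) ∈ B)
    (hAs : ∀ x ∈ A, ∃ i, f (la i) = x) (hBs : ∀ x ∈ B, ∃ j, f (lb j) = x) :
    ∀ p q, (doubleStar a b).Adj p q ↔ pat u v A B (f p) (f q) := by
  obtain ⟨hfu, hfv, hfA, hfB⟩ := map_mem_char h hinj h0 h1 hA hB hAs hBs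
  have key : ∀ p q : Fin (a + b + 2), p.1 = 0 → q.1 = 1 → p = w0 ∧ q = w1 := by
    intro p q hp hq; exact ⟨Fin.ext hp, Fin.ext hq⟩
  intro p q
  constructor
  · intro hadj
    rw [ds_adj_iff] at hadj
    obtain ⟨hne, hcases⟩ := hadj
    rcases hcases with ⟨hp, hq⟩ | ⟨hp, hq1, hq2⟩ | ⟨hp, hq⟩ | ⟨hq, hp⟩ | ⟨hq, hp1, hp2⟩ |
      ⟨hq, hp⟩
    · obtain ⟨rfl, rfl⟩ := key p q hp hq
      exact Or.inl ⟨h0, h1⟩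
    · have hq' : q = la ⟨q.1 - 2, by omega⟩ := Fin.ext (by simp only [la, Fin.val_mk]; omega)
      have hp' : p = w0 := Fin.ext hp
      subst hp'; rw [hq']
      exact Or.inr (Or.inr (Or.inl ⟨h0, hA _⟩))
    · have hq' : q = lb ⟨q.1 - (a + 2), by have := q.isLt; omega⟩ :=
        Fin.ext (by simp only [lb, Fin.val_mk]; omega)
      have hp' : p = w1 := Fin.ext hp
      subst hp'; rw [hq']
      exact Or.inr (Or.inr (Or.inr (Or.inr (Or.inl ⟨h1, hB _⟩))))
    · obtain ⟨rfl, rfl⟩ := key q p hq hp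
      exact Or.inr (Or.inl ⟨h1, h0⟩)
    · have hp' : p = la ⟨p.1 - 2, by omega⟩ := Fin.ext (by simp only [la, Fin.val_mk]; omega)
      have hq' : q = w0 := Fin.ext hq
      subst hq'; rw [hp']
      exact Or.inr (Or.inr (Or.inr (Or.inl ⟨hA _, h0⟩)))
    · have hp' : p = lb ⟨p.1 - (a + 2), by have := p.isLt; omega⟩ :=
        Fin.ext (by simp only [lb, Fin.val_mk]; omega)
      have hq' : q = w1 := Fin.ext hq
      subst hq'; rw [hp']
      exact Or.inr (Or.inr (Or.inr (Or.inr (Or.inr ⟨hB _, h1⟩))))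
  · intro hp
    rcases hp with ⟨hx, hy⟩ | ⟨hx, hy⟩ | ⟨hx, hy⟩ | ⟨hx, hy⟩ | ⟨hx, hy⟩ | ⟨hx, hy⟩
    · rw [(hfu p).mp hx, (hfv q).mp hy]; exact ds_adj_01
    · rw [(hfv p).mp hx, (hfu q).mp hy]; exact ds_adj_01.symm
    · obtain ⟨i, rfl⟩ := (hfA q).mp hy
      rw [(hfu p).mp hx]; exact ds_adj_0la i
    · obtain ⟨i, rfl⟩ := (hfA p).mp hx
      rw [(hfu q).mp hy]; exact (ds_adj_0la i).symm
    · obtain ⟨j, rfl⟩ := (hfB q).mp hy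
      rw [(hfv p).mp hx]; exact ds_adj_1lb j
    · obtain ⟨j, rfl⟩ := (hfB p).mp hx
      rw [(hfv q).mp hy]; exact (ds_adj_1lb j).symm

lemma contains_iff_conf : Contains (doubleStar a b) G ↔ (conf G a b).Nonempty := by
  constructor
  · rintro ⟨f, hinj⟩
    refine ⟨(f w0, f w1, Finset.image (fun i => f (la i)) Finset.univ,
      Finset.image (fun j => f (lb j)) Finset.univ), ?_⟩
    rw [mem_conf]
    have hla : Function.Injective (fun i : Fin a => f (la i)) :=
      fun i j hij => la_inj (hinj hij)
    have hlb : Function.Injective (fun j : Fin b => f (lb j)) :=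
      fun i j hij => lb_inj (hinj hij)
    refine ⟨f.map_adj ds_adj_01, ?_, ?_, ?_, ?_, ?_⟩
    · intro x hx
      simp only [Finset.mem_image, Finset.mem_univ, true_and] at hx
      obtain ⟨i, rfl⟩ := hx
      rw [Finset.mem_erase, SimpleGraph.mem_neighborFinset]
      refine ⟨fun hc => ?_, f.map_adj (ds_adj_0la i)⟩
      have := hinj hc
      simp [la, w1, Fin.ext_iff] at this
    · rw [Finset.card_image_of_injective _ hla, Finset.card_univ, Fintype.card_fin]
    · intro x hx
      simp only [Finset.mem_image, Finset.mem_univ, true_and] at hx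
      obtain ⟨j, rfl⟩ := hx
      rw [Finset.mem_erase, SimpleGraph.mem_neighborFinset]
      refine ⟨fun hc => ?_, f.map_adj (ds_adj_1lb j)⟩
      have := hinj hc
      simp [lb, w0, Fin.ext_iff] at this
    · rw [Finset.card_image_of_injective _ hlb, Finset.card_univ, Fintype.card_fin]
    · rw [Finset.disjoint_left]
      intro x hx hx'
      simp only [Finset.mem_image, Finset.mem_univ, true_and] at hx hx'
      obtain ⟨i, rfl⟩ := hx
      obtain ⟨j, hj⟩ := hx'
      have := hinj hj
      simp [la, lb, Fin.ext_iff] at this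
      omega
  · rintro ⟨⟨u, v, A, B⟩, ht⟩
    obtain ⟨f, hinj, h0, h1, hA, hB, hAs, hBs⟩ := exists_std_map ht
    have hiff := map_pat_iff ht hinj h0 h1 hA hB hAs hBs
    exact ⟨⟨f, fun hpq => pat_imp_adj ht ((hiff _ _).mp hpq)⟩, hinj⟩

variable {V' : Type*} [Fintype V'] [DecidableEq V'] {G' : SimpleGraph V'}

lemma conf_card_iso (e : G ≃g G') (a b : ℕ) :
    (conf G a b).card = (conf G' a b).card := by
  refine Finset.card_bij'
    (fun t _ => (e t.1, e t.2.1, t.2.2.1.image e, t.2.2.2.image e))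
    (fun t _ => (e.symm t.1, e.symm t.2.1, t.2.2.1.image e.symm, t.2.2.2.image e.symm))
    ?_ ?_ ?_ ?_
  · rintro ⟨u, v, A, B⟩ ht
    rw [mem_conf] at ht ⊢
    obtain ⟨hadj, hA, hca, hB, hcb, hd⟩ := ht
    refine ⟨e.map_adj_iff.mpr hadj, ?_, ?_, ?_, ?_, ?_⟩
    · intro x hx
      simp only [Finset.mem_image] at hx
      obtain ⟨y, hy, rfl⟩ := hx
      have := hA hy
      rw [Finset.mem_erase, SimpleGraph.mem_neighborFinset] at this ⊢
      exact ⟨fun hc => this.1 (e.injective hc), e.map_adj_iff.mpr this.2⟩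
    · rw [Finset.card_image_of_injective _ e.injective, hca]
    · intro x hx
      simp only [Finset.mem_image] at hx
      obtain ⟨y, hy, rfl⟩ := hx
      have := hB hy
      rw [Finset.mem_erase, SimpleGraph.mem_neighborFinset] at this ⊢
      exact ⟨fun hc => this.1 (e.injective hc), e.map_adj_iff.mpr this.2⟩
    · rw [Finset.card_image_of_injective _ e.injective, hcb]
    · exact Finset.disjoint_image e.injective |>.mpr hd
  · rintro ⟨u, v, A, B⟩ ht
    rw [mem_conf] at ht ⊢
    obtain ⟨hadj, hA, hca, hB, hcb, hd⟩ := ht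
    refine ⟨e.symm.map_adj_iff.mpr hadj, ?_, ?_, ?_, ?_, ?_⟩
    · intro x hx
      simp only [Finset.mem_image] at hx
      obtain ⟨y, hy, rfl⟩ := hx
      have := hA hy
      rw [Finset.mem_erase, SimpleGraph.mem_neighborFinset] at this ⊢
      exact ⟨fun hc => this.1 (e.symm.injective hc), e.symm.map_adj_iff.mpr this.2⟩
    · rw [Finset.card_image_of_injective _ e.symm.injective, hca]
    · intro x hx
      simp only [Finset.mem_image] at hx
      obtain ⟨y, hy, rfl⟩ := hx
      have := hB hy
      rw [Finset.mem_erase, SimpleGraph.mem_neighborFinset] at this ⊢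
      exact ⟨fun hc => this.1 (e.symm.injective hc), e.symm.map_adj_iff.mpr this.2⟩
    · rw [Finset.card_image_of_injective _ e.symm.injective, hcb]
    · exact Finset.disjoint_image e.symm.injective |>.mpr hd
  · rintro ⟨u, v, A, B⟩ _
    simp [Finset.image_image, Function.comp_def]
  · rintro ⟨u, v, A, B⟩ _
    simp [Finset.image_image, Function.comp_def]

/-- the subgraph spanned by a configuration -/
def psub (G : SimpleGraph V) (t : V × V × Finset V × Finset V) : G.Subgraph where
  verts := ↑(insert t.1 (insert t.2.1 (t.2.2.1 ∪ t.2.2.2)))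
  Adj x y := pat t.1 t.2.1 t.2.2.1 t.2.2.2 x y ∧ G.Adj x y
  adj_sub h := h.2
  edge_vert {x y} h := by
    have hp := h.1
    unfold pat at hp
    simp only [Finset.coe_insert, Set.mem_insert_iff, Finset.coe_union, Set.mem_union,
      Finset.mem_coe]
    tauto
  symm := ⟨fun x y h => ⟨pat_symm h.1, h.2.symm⟩⟩

lemma psub_adj {G : SimpleGraph V} {t : V × V × Finset V × Finset V} {x y : V} :
    (psub G t).Adj x y ↔ pat t.1 t.2.1 t.2.2.1 t.2.2.2 x y ∧ G.Adj x y := Iff.rfl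

lemma mem_psub_verts {G : SimpleGraph V} {t : V × V × Finset V × Finset V} {x : V} :
    x ∈ (psub G t).verts ↔ x = t.1 ∨ x = t.2.1 ∨ x ∈ t.2.2.1 ∨ x ∈ t.2.2.2 := by
  show x ∈ ↑(insert t.1 (insert t.2.1 (t.2.2.1 ∪ t.2.2.2))) ↔ _
  simp

lemma mem_psub_verts' {G : SimpleGraph V} {u v : V} {A B : Finset V} {x : V} :
    x ∈ (psub G (u, v, A, B)).verts ↔ x = u ∨ x = v ∨ x ∈ A ∨ x ∈ B := mem_psub_verts

lemma psub_adj_conf {G : SimpleGraph V} {a b : ℕ} {u v : V} {A B : Finset V}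
    (h : (u, v, A, B) ∈ conf G a b) {x y : V} :
    (psub G (u, v, A, B)).Adj x y ↔ pat u v A B x y :=
  ⟨fun hh => hh.1, fun hh => ⟨hh, pat_imp_adj h hh⟩⟩

lemma copies_eq {G : SimpleGraph V} {a b : ℕ} (ha : 0 < a) (hb : 0 < b) :
    {G' : G.Subgraph | Nonempty (doubleStar a b ≃g G'.coe)} =
      psub G '' ↑(conf G a b) := by
  ext G'
  simp only [Set.mem_setOf_eq, Set.mem_image, Finset.mem_coe]
  constructor
  · rintro ⟨e⟩
    set g : Fin (a + b + 2) → V := fun p => (e p : V) with hg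
    have hginj : Function.Injective g := fun p q hpq =>
      e.injective (Subtype.ext hpq)
    set u := g w0
    set v := g w1
    set A : Finset V := Finset.image (fun i => g (la i)) Finset.univ with hA
    set B : Finset V := Finset.image (fun j => g (lb j)) Finset.univ with hB
    have hgadj : ∀ p q, (doubleStar a b).Adj p q → G'.Adj (g p) (g q) := by
      intro p q hpq
      have := e.map_rel_iff.mpr hpq
      rwa [SimpleGraph.Subgraph.coe_adj] at this
    have ht : (u, v, A, B) ∈ conf G a b := by
      rw [mem_conf]
      have hlainj : Function.Injective (fun i : Fin a => g (la i)) :=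
        fun i j hij => la_inj (hginj hij)
      have hlbinj : Function.Injective (fun j : Fin b => g (lb j)) :=
        fun i j hij => lb_inj (hginj hij)
      refine ⟨G'.adj_sub (hgadj _ _ ds_adj_01), ?_, ?_, ?_, ?_, ?_⟩
      · intro x hx
        simp only [hA, Finset.mem_image, Finset.mem_univ, true_and] at hx
        obtain ⟨i, rfl⟩ := hx
        rw [Finset.mem_erase, SimpleGraph.mem_neighborFinset]
        refine ⟨fun hc => ?_, G'.adj_sub (hgadj _ _ (ds_adj_0la i))⟩
        have := hginj hc
        simp [la, w1, Fin.ext_iff] at this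
      · rw [hA, Finset.card_image_of_injective _ hlainj, Finset.card_univ, Fintype.card_fin]
      · intro x hx
        simp only [hB, Finset.mem_image, Finset.mem_univ, true_and] at hx
        obtain ⟨j, rfl⟩ := hx
        rw [Finset.mem_erase, SimpleGraph.mem_neighborFinset]
        refine ⟨fun hc => ?_, G'.adj_sub (hgadj _ _ (ds_adj_1lb j))⟩
        have := hginj hc
        simp [lb, w0, Fin.ext_iff] at this
      · rw [hB, Finset.card_image_of_injective _ hlbinj, Finset.card_univ, Fintype.card_fin]
      · rw [Finset.disjoint_left]
        intro x hx hx'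
        simp only [hA, hB, Finset.mem_image, Finset.mem_univ, true_and] at hx hx'
        obtain ⟨i, rfl⟩ := hx
        obtain ⟨j, hj⟩ := hx'
        have := hginj hj
        simp [la, lb, Fin.ext_iff] at this
        omega
    refine ⟨(u, v, A, B), ht, ?_⟩
    have hiff := map_pat_iff ht hginj rfl rfl
      (fun i => by simp [hA]) (fun j => by simp [hB])
      (fun x hx => by
        simp only [hA, Finset.mem_image, Finset.mem_univ, true_and] at hx
        exact hx)
      (fun x hx => by
        simp only [hB, Finset.mem_image, Finset.mem_univ, true_and] at hx
        exact hx)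
    have hsurj : ∀ x ∈ G'.verts, ∃ p, g p = x := by
      intro x hx
      obtain ⟨p, hp⟩ := e.surjective ⟨x, hx⟩
      exact ⟨p, congrArg Subtype.val hp⟩
    apply SimpleGraph.Subgraph.ext
    · -- verts
      apply Set.eq_of_subset_of_subset
      · intro x hx
        rw [mem_psub_verts'] at hx
        rcases hx with rfl | rfl | hx | hx
        · exact (e w0).2
        · exact (e w1).2
        · simp only [hA, Finset.mem_image, Finset.mem_univ, true_and] at hx
          obtain ⟨i, rfl⟩ := hx; exact (e (la i)).2
        · simp only [hB, Finset.mem_image, Finset.mem_univ, true_and] at hx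
          obtain ⟨j, rfl⟩ := hx; exact (e (lb j)).2
      · intro x hx
        obtain ⟨p, rfl⟩ := hsurj x hx
        rw [mem_psub_verts']
        rcases fin_cases4 p with rfl | rfl | ⟨i, rfl⟩ | ⟨j, rfl⟩
        · exact Or.inl rfl
        · exact Or.inr (Or.inl rfl)
        · exact Or.inr (Or.inr (Or.inl (by simp [hA])))
        · exact Or.inr (Or.inr (Or.inr (by simp [hB])))
    · -- adjacency
      funext x y
      apply propext
      constructor
      · intro hxy
        have hp := ((psub_adj (G := G)).mp hxy).1
        have hxv : x ∈ (psub G (u,v,A,B)).verts := (psub G _).edge_vert hxy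
        have hyv : y ∈ (psub G (u,v,A,B)).verts := (psub G _).edge_vert hxy.symm
        rw [mem_psub_verts'] at hxv hyv
        have hxg : ∃ p, g p = x := by
          rcases hxv with rfl | rfl | hx | hx
          · exact ⟨w0, rfl⟩
          · exact ⟨w1, rfl⟩
          · simp only [hA, Finset.mem_image, Finset.mem_univ, true_and] at hx
            obtain ⟨i, hi⟩ := hx; exact ⟨la i, hi⟩
          · simp only [hB, Finset.mem_image, Finset.mem_univ, true_and] at hx
            obtain ⟨j, hj⟩ := hx; exact ⟨lb j, hj⟩
        have hyg : ∃ q, g q = y := by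
          rcases hyv with rfl | rfl | hy | hy
          · exact ⟨w0, rfl⟩
          · exact ⟨w1, rfl⟩
          · simp only [hA, Finset.mem_image, Finset.mem_univ, true_and] at hy
            obtain ⟨i, hi⟩ := hy; exact ⟨la i, hi⟩
          · simp only [hB, Finset.mem_image, Finset.mem_univ, true_and] at hy
            obtain ⟨j, hj⟩ := hy; exact ⟨lb j, hj⟩
        obtain ⟨p, rfl⟩ := hxg
        obtain ⟨q, rfl⟩ := hyg
        have h2 : (doubleStar a b).Adj p q := (hiff p q).mpr hp
        have := e.map_rel_iff.mpr h2
        rwa [SimpleGraph.Subgraph.coe_adj] at this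
      · intro hxy
        have hx := G'.edge_vert hxy
        have hy := G'.edge_vert hxy.symm
        obtain ⟨p, rfl⟩ := hsurj x hx
        obtain ⟨q, rfl⟩ := hsurj y hy
        have : (doubleStar a b).Adj p q := by
          apply e.map_rel_iff.mp
          rw [SimpleGraph.Subgraph.coe_adj]
          exact hxy
        exact (psub_adj_conf ht).mpr ((hiff p q).mp this)
  · rintro ⟨⟨u, v, A, B⟩, ht, rfl⟩
    obtain ⟨f, hinj, h0, h1, hAmem, hBmem, hAs, hBs⟩ := exists_std_map ht
    have hiff := map_pat_iff ht hinj h0 h1 hAmem hBmem hAs hBs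
    have hmem : ∀ x : Fin (a + b + 2), f x ∈ (psub G (u, v, A, B)).verts := by
      intro x
      rw [mem_psub_verts']
      rcases fin_cases4 x with rfl | rfl | ⟨i, rfl⟩ | ⟨j, rfl⟩
      · exact Or.inl h0
      · exact Or.inr (Or.inl h1)
      · exact Or.inr (Or.inr (Or.inl (hAmem i)))
      · exact Or.inr (Or.inr (Or.inr (hBmem j)))
    set φ : Fin (a + b + 2) → (psub G (u, v, A, B)).verts := fun x => ⟨f x, hmem x⟩ with hφ
    have hφinj : Function.Injective φ := fun p q hpq => hinj (Subtype.ext_iff.mp hpq)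
    have hφsurj : Function.Surjective φ := by
      rintro ⟨y, hy⟩
      rw [mem_psub_verts'] at hy
      rcases hy with rfl | rfl | hy | hy
      · exact ⟨w0, Subtype.ext h0⟩
      · exact ⟨w1, Subtype.ext h1⟩
      · obtain ⟨i, hi⟩ := hAs y hy; exact ⟨la i, Subtype.ext hi⟩
      · obtain ⟨j, hj⟩ := hBs y hy; exact ⟨lb j, Subtype.ext hj⟩
    have hφbij : Function.Bijective φ := ⟨hφinj, hφsurj⟩
    refine ⟨⟨Equiv.ofBijective φ hφbij, ?_⟩⟩
    intro p q
    simp only [Equiv.ofBijective_apply]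
    rw [SimpleGraph.Subgraph.coe_adj]
    show (psub G (u,v,A,B)).Adj (f p) (f q) ↔ (doubleStar a b).Adj p q
    rw [psub_adj_conf ht]
    exact (hiff p q).symm

lemma pat_u_iff (h : (u, v, A, B) ∈ conf G a b) (x : V) :
    pat u v A B u x ↔ (x = v ∨ x ∈ A) := by
  obtain ⟨hadj, hne, huA, hvA, huB, hvB, hAB, hAu, hBv⟩ := conf_facts h
  unfold pat
  constructor
  · rintro (⟨-, rfl⟩ | ⟨h1, -⟩ | ⟨-, h2⟩ | ⟨h1, -⟩ | ⟨h1, -⟩ | ⟨h1, -⟩) <;> tauto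
  · rintro (rfl | hx) <;> tauto

lemma pat_v_iff (h : (u, v, A, B) ∈ conf G a b) (x : V) :
    pat u v A B v x ↔ (x = u ∨ x ∈ B) := by
  obtain ⟨hadj, hne, huA, hvA, huB, hvB, hAB, hAu, hBv⟩ := conf_facts h
  unfold pat
  constructor
  · rintro (⟨h1, -⟩ | ⟨-, rfl⟩ | ⟨h1, -⟩ | ⟨h1, -⟩ | ⟨-, h2⟩ | ⟨h1, -⟩) <;> tauto
  · rintro (rfl | hx) <;> tauto

lemma pat_leafA_iff (h : (u, v, A, B) ∈ conf G a b) {w : V} (hw : w ∈ A) (x : V) :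
    pat u v A B w x ↔ x = u := by
  obtain ⟨hadj, hne, huA, hvA, huB, hvB, hAB, hAu, hBv⟩ := conf_facts h
  unfold pat
  constructor
  · rintro (⟨rfl, -⟩ | ⟨rfl, -⟩ | ⟨rfl, -⟩ | ⟨-, rfl⟩ | ⟨rfl, -⟩ | ⟨h1, -⟩) <;> tauto
  · rintro rfl; tauto

lemma pat_leafB_iff (h : (u, v, A, B) ∈ conf G a b) {w : V} (hw : w ∈ B) (x : V) :
    pat u v A B w x ↔ x = v := by
  obtain ⟨hadj, hne, huA, hvA, huB, hvB, hAB, hAu, hBv⟩ := conf_facts h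
  unfold pat
  constructor
  · rintro (⟨rfl, -⟩ | ⟨rfl, -⟩ | ⟨rfl, -⟩ | ⟨h1, -⟩ | ⟨rfl, -⟩ | ⟨-, rfl⟩) <;> tauto
  · rintro rfl; tauto

lemma swap_mem_conf (h : (u, v, A, B) ∈ conf G a b) : (v, u, B, A) ∈ conf G b a := by
  rw [mem_conf] at h ⊢
  obtain ⟨hadj, hA, hca, hB, hcb, hd⟩ := h
  exact ⟨hadj.symm, hB, hcb, hA, hca, hd.symm⟩

lemma psub_swap (u v : V) (A B : Finset V) :
    psub G (v, u, B, A) = psub G (u, v, A, B) := by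
  apply SimpleGraph.Subgraph.ext
  · show (↑(insert v (insert u (B ∪ A))) : Set V) = ↑(insert u (insert v (A ∪ B)))
    rw [Finset.coe_inj]
    ext x
    simp only [Finset.mem_insert, Finset.mem_union]
    tauto
  · funext x y
    apply propext
    rw [psub_adj, psub_adj]
    unfold pat
    simp only
    tauto

lemma psub_eq_cases (ha : 0 < a) (hb : 0 < b) {u v u' v' : V} {A B A' B' : Finset V}
    (ht : (u, v, A, B) ∈ conf G a b) (ht' : (u', v', A', B') ∈ conf G a b)
    (h : psub G (u, v, A, B) = psub G (u', v', A', B')) :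
    (u, v, A, B) = (u', v', A', B') ∨ (a = b ∧ (u', v', A', B') = (v, u, B, A)) := by
  have hpat : ∀ x y, pat u v A B x y ↔ pat u' v' A' B' x y := by
    intro x y
    rw [← psub_adj_conf ht, h, psub_adj_conf ht']
  obtain ⟨hadj, hne, huA, hvA, huB, hvB, hAB, hAu, hBv⟩ := conf_facts ht
  obtain ⟨hadj', hne', huA', hvA', huB', hvB', hAB', hAu', hBv'⟩ := conf_facts ht'
  obtain ⟨hca, hcb⟩ : A.card = a ∧ B.card = b := by
    rw [mem_conf] at ht; exact ⟨ht.2.2.1, ht.2.2.2.2.1⟩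
  obtain ⟨hca', hcb'⟩ : A'.card = a ∧ B'.card = b := by
    rw [mem_conf] at ht'; exact ⟨ht'.2.2.1, ht'.2.2.2.2.1⟩
  obtain ⟨zA, hzA⟩ : A.Nonempty := Finset.card_pos.mp (hca ▸ ha)
  obtain ⟨zB, hzB⟩ : B.Nonempty := Finset.card_pos.mp (hcb ▸ hb)
  have h1 : pat u' v' A' B' u v := (hpat u v).mp (Or.inl ⟨rfl, rfl⟩)
  have hpu : ∀ x, pat u v A B u x ↔ (x = v ∨ x ∈ A) := pat_u_iff ht
  have hpv : ∀ x, pat u v A B v x ↔ (x = u ∨ x ∈ B) := pat_v_iff ht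
  rcases h1 with ⟨h1u, h1v⟩ | ⟨h1u, h1v⟩ | ⟨h1u, h1v⟩ | ⟨h1u, h1v⟩ | ⟨h1u, h1v⟩ | ⟨h1u, h1v⟩
  · -- u = u', v = v'
    subst h1u; subst h1v
    left
    have hAA : A = A' := by
      ext x
      constructor
      · intro hx
        have := (hpat u x).mp ((hpu x).mpr (Or.inr hx))
        rcases (pat_u_iff ht' x).mp this with rfl | hx'
        · exact absurd hx hvA
        · exact hx'
      · intro hx
        have := (hpat u x).mpr ((pat_u_iff ht' x).mpr (Or.inr hx))
        rcases (hpu x).mp this with rfl | hx'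
        · exact absurd hx hvA'
        · exact hx'
    have hBB : B = B' := by
      ext x
      constructor
      · intro hx
        have := (hpat v x).mp ((hpv x).mpr (Or.inr hx))
        rcases (pat_v_iff ht' x).mp this with rfl | hx'
        · exact absurd hx huB
        · exact hx'
      · intro hx
        have := (hpat v x).mpr ((pat_v_iff ht' x).mpr (Or.inr hx))
        rcases (hpv x).mp this with rfl | hx'
        · exact absurd hx huB'
        · exact hx'
    rw [hAA, hBB]
  · -- u = v', v = u'
    subst h1u; subst h1v
    right
    have hAB' : A = B' := by
      ext x
      constructor
      · intro hx
        have := (hpat u x).mp ((hpu x).mpr (Or.inr hx))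
        rcases (pat_v_iff ht' x).mp this with rfl | hx'
        · exact absurd hx hvA
        · exact hx'
      · intro hx
        have := (hpat u x).mpr ((pat_v_iff ht' x).mpr (Or.inr hx))
        rcases (hpu x).mp this with rfl | hx'
        · exact absurd hx huB'
        · exact hx'
    have hBA' : B = A' := by
      ext x
      constructor
      · intro hx
        have := (hpat v x).mp ((hpv x).mpr (Or.inr hx))
        rcases (pat_u_iff ht' x).mp this with rfl | hx'
        · exact absurd hx huB
        · exact hx'
      · intro hx
        have := (hpat v x).mpr ((pat_u_iff ht' x).mpr (Or.inr hx))
        rcases (hpv x).mp this with rfl | hx'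
        · exact absurd hx hvA'
        · exact hx'
    constructor
    · rw [← hca, ← hcb', hAB']
    · rw [hAB', hBA']
  · -- u = u', v ∈ A' : contradiction
    exfalso
    have e1 : u = u' := ((pat_leafA_iff ht' h1v u).mp
      ((hpat v u).mp ((hpv u).mpr (Or.inl rfl))))
    have e2 : zB = u' := ((pat_leafA_iff ht' h1v zB).mp
      ((hpat v zB).mp ((hpv zB).mpr (Or.inr hzB))))
    exact huB ((e2.trans e1.symm) ▸ hzB)
  · -- u ∈ A', v = u' : contradiction
    exfalso
    have e2 : zA = u' := ((pat_leafA_iff ht' h1u zA).mp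
      ((hpat u zA).mp ((hpu zA).mpr (Or.inr hzA))))
    exact hvA ((e2.trans h1v.symm) ▸ hzA)
  · -- u = v', v ∈ B' : contradiction
    exfalso
    have e2 : zB = v' := ((pat_leafB_iff ht' h1v zB).mp
      ((hpat v zB).mp ((hpv zB).mpr (Or.inr hzB))))
    exact huB ((e2.trans h1u.symm) ▸ hzB)
  · -- u ∈ B', v = v' : contradiction
    exfalso
    have e2 : zA = v' := ((pat_leafB_iff ht' h1u zA).mp
      ((hpat u zA).mp ((hpu zA).mpr (Or.inr hzA))))
    exact hvA ((e2.trans h1v.symm) ▸ hzA)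

lemma copyCount_mul (ha : 0 < a) (hb : 0 < b) (G : SimpleGraph V) :
    _root_.copyCount (doubleStar a b) G * (if a = b then 2 else 1) = (conf G a b).card := by
  rw [_root_.copyCount, copies_eq ha hb, ← Finset.coe_image, Set.ncard_coe_finset]
  rw [Finset.card_eq_sum_card_image (psub G) (conf G a b)]
  have hfib : ∀ y ∈ (conf G a b).image (psub G),
      ((conf G a b).filter (fun t => psub G t = y)).card = (if a = b then 2 else 1) := by
    intro y hy
    rw [Finset.mem_image] at hy
    obtain ⟨⟨u, v, A, B⟩, ht, rfl⟩ := hy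
    obtain ⟨hadj, hne, huA, hvA, huB, hvB, hAB2, hAu, hBv⟩ := conf_facts ht
    by_cases hab : a = b
    · subst hab
      rw [if_pos rfl]
      have : (conf G a a).filter (fun t => psub G t = psub G (u, v, A, B)) =
          {(u, v, A, B), (v, u, B, A)} := by
        ext ⟨u', v', A', B'⟩
        rw [Finset.mem_filter, Finset.mem_insert, Finset.mem_singleton]
        constructor
        · rintro ⟨ht', heq⟩
          rcases psub_eq_cases ha ha ht' ht heq with h | ⟨-, h⟩
          · exact Or.inl h
          · right
            obtain ⟨e1, e2, e3, e4⟩ : u = v' ∧ v = u' ∧ A = B' ∧ B = A' := by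
              simpa [Prod.ext_iff] using h
            simp only [Prod.mk.injEq]
            exact ⟨e2.symm, e1.symm, e4.symm, e3.symm⟩
        · rintro (h | h)
          · rw [h]; exact ⟨ht, rfl⟩
          · rw [h]
            exact ⟨swap_mem_conf ht, psub_swap u v A B⟩
      rw [this]
      rw [Finset.card_insert_of_notMem, Finset.card_singleton]
      rw [Finset.mem_singleton]
      intro hc
      exact hne (congrArg Prod.fst hc)
    · rw [if_neg hab]
      have : (conf G a b).filter (fun t => psub G t = psub G (u, v, A, B)) =
          {(u, v, A, B)} := by
        ext ⟨u', v', A', B'⟩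
        rw [Finset.mem_filter, Finset.mem_singleton]
        constructor
        · rintro ⟨ht', heq⟩
          rcases psub_eq_cases ha hb ht' ht heq with h | ⟨hab', -⟩
          · exact h
          · exact absurd hab' hab
        · rintro h
          rw [h]
          exact ⟨ht, rfl⟩
      rw [this, Finset.card_singleton]
  rw [Finset.sum_congr rfl hfib, Finset.sum_const, smul_eq_mul]

end maps

section count

variable {G : SimpleGraph V} {a b : ℕ} {u v : V}

/-- ordered adjacent pairs -/
noncomputable def Epairs (G : SimpleGraph V) : Finset (V × V) :=
  (Finset.univ ×ˢ Finset.univ).filter (fun p => G.Adj p.1 p.2)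

/-- configurations with a fixed central pair -/
noncomputable def confUV (G : SimpleGraph V) (a b : ℕ) (u v : V) :
    Finset (Finset V × Finset V) :=
  ((((G.neighborFinset u).erase v).powersetCard a) ×ˢ
    (((G.neighborFinset v).erase u).powersetCard b)).filter (fun q => Disjoint q.1 q.2)

lemma conf_card_eq (G : SimpleGraph V) (a b : ℕ) :
    (conf G a b).card = ∑ p ∈ Epairs G, (confUV G a b p.1 p.2).card := by
  have hdec : conf G a b = (Epairs G).biUnion
      (fun p => (confUV G a b p.1 p.2).image (fun q => (p.1, p.2, q.1, q.2))) := by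
    ext ⟨u, v, A, B⟩
    rw [mem_conf, Finset.mem_biUnion]
    constructor
    · rintro ⟨hadj, hA, hca, hB, hcb, hd⟩
      refine ⟨(u, v), ?_, ?_⟩
      · simp [Epairs, hadj]
      · rw [Finset.mem_image]
        refine ⟨(A, B), ?_, rfl⟩
        rw [confUV, Finset.mem_filter, Finset.mem_product]
        exact ⟨⟨Finset.mem_powersetCard.mpr ⟨hA, hca⟩, Finset.mem_powersetCard.mpr ⟨hB, hcb⟩⟩, hd⟩
    · rintro ⟨p, hp, hmem⟩
      rw [Finset.mem_image] at hmem
      obtain ⟨q, hq, heq⟩ := hmem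
      obtain ⟨e1, e2, e3, e4⟩ : p.1 = u ∧ p.2 = v ∧ q.1 = A ∧ q.2 = B := by
        simpa [Prod.ext_iff] using heq
      subst e1; subst e2; subst e3; subst e4
      rw [confUV, Finset.mem_filter, Finset.mem_product] at hq
      obtain ⟨⟨h1, h2⟩, h3⟩ := hq
      rw [Finset.mem_powersetCard] at h1 h2
      simp only [Epairs, Finset.mem_filter] at hp
      exact ⟨hp.2, h1.1, h1.2, h2.1, h2.2, h3⟩
  rw [hdec, Finset.card_biUnion]
  · apply Finset.sum_congr rfl
    intro p _
    apply Finset.card_image_of_injective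
    intro q q' hqq
    simpa [Prod.ext_iff] using hqq
  · intro p _ p' _ hpp
    simp only [Function.onFun]
    rw [Finset.disjoint_left]
    intro t ht ht'
    rw [Finset.mem_image] at ht ht'
    obtain ⟨q, -, rfl⟩ := ht
    obtain ⟨q', -, heq⟩ := ht'
    apply hpp
    have := congrArg (fun t : V × V × Finset V × Finset V => (t.1, t.2.1)) heq
    simpa [Prod.ext_iff] using this.symm

lemma confUV_card_le (hadj : G.Adj u v) :
    (confUV G a b u v).card ≤ (G.degree u - 1).choose a * (G.degree v - 1).choose b := by
  calc (confUV G a b u v).card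
      ≤ ((((G.neighborFinset u).erase v).powersetCard a) ×ˢ
          (((G.neighborFinset v).erase u).powersetCard b)).card :=
        Finset.card_filter_le _ _
    _ = _ := by
        rw [Finset.card_product, Finset.card_powersetCard, Finset.card_powersetCard,
          Finset.card_erase_of_mem, Finset.card_erase_of_mem]
        · rfl
        · rw [SimpleGraph.mem_neighborFinset]; exact hadj.symm
        · rw [SimpleGraph.mem_neighborFinset]; exact hadj

/-- in an `S_{c,d}`-free graph, neighbours of high-degree vertices have degree ≤ c -/
lemma free_deg_le {c d : ℕ} (hfree : ¬ Contains (doubleStar c d) G)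
    (hadj : G.Adj u v) (hv : c + d + 2 ≤ G.degree v) : G.degree u ≤ c := by
  by_contra hc
  push_neg at hc
  apply hfree
  rw [contains_iff_conf]
  have hNu : c ≤ ((G.neighborFinset u).erase v).card := by
    rw [Finset.card_erase_of_mem (by rw [SimpleGraph.mem_neighborFinset]; exact hadj)]
    have : G.degree u = (G.neighborFinset u).card := rfl
    omega
  obtain ⟨C, hCsub, hCcard⟩ := Finset.exists_subset_card_eq hNu
  have hNv : d ≤ (((G.neighborFinset v).erase u) \ C).card := by
    have h1 : (G.neighborFinset v).card = G.degree v := rfl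
    have h2 : ((G.neighborFinset v).erase u).card = G.degree v - 1 := by
      rw [Finset.card_erase_of_mem (by rw [SimpleGraph.mem_neighborFinset]; exact hadj.symm)]
      rfl
    have h3 := Finset.le_card_sdiff C ((G.neighborFinset v).erase u)
    have h4 : ((G.neighborFinset v).erase u).card - C.card
        ≤ (((G.neighborFinset v).erase u) \ C).card := h3
    omega
  obtain ⟨D, hDsub, hDcard⟩ := Finset.exists_subset_card_eq hNv
  refine ⟨(u, v, C, D), ?_⟩
  rw [mem_conf]
  refine ⟨hadj, hCsub, hCcard, fun x hx => (Finset.mem_sdiff.mp (hDsub hx)).1, hDcard, ?_⟩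
  rw [Finset.disjoint_right]
  intro x hx
  exact (Finset.mem_sdiff.mp (hDsub hx)).2

end count

section wgraph

/-- the complete bipartite graph K_{c, n-c} on `Fin n` -/
def Wg (n c : ℕ) : SimpleGraph (Fin n) where
  Adj x y := (x.1 < c ∧ c ≤ y.1) ∨ (y.1 < c ∧ c ≤ x.1)
  symm := ⟨fun x y h => by tauto⟩
  loopless := ⟨fun x h => by rcases h with ⟨h1, h2⟩ | ⟨h1, h2⟩ <;> omega⟩

variable {n c : ℕ}

lemma Wg_adj {x y : Fin n} : (Wg n c).Adj x y ↔
    (x.1 < c ∧ c ≤ y.1) ∨ (y.1 < c ∧ c ≤ x.1) := Iff.rfl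

lemma card_filter_small (hcn : c ≤ n) :
    ((Finset.univ : Finset (Fin n)).filter (fun y => y.1 < c)).card = c := by
  have himg : (Finset.univ : Finset (Fin n)).filter (fun y => y.1 < c) =
      (Finset.univ : Finset (Fin c)).image (Fin.castLE hcn) := by
    ext y
    simp only [Finset.mem_filter, Finset.mem_univ, true_and, Finset.mem_image]
    constructor
    · intro hy
      exact ⟨⟨y.1, hy⟩, by simp [Fin.castLE, Fin.ext_iff]⟩
    · rintro ⟨i, rfl⟩
      exact i.isLt
  rw [himg, Finset.card_image_of_injective _ (Fin.castLE_injective hcn),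
    Finset.card_univ, Fintype.card_fin]

lemma card_filter_big (hcn : c ≤ n) :
    ((Finset.univ : Finset (Fin n)).filter (fun y => c ≤ y.1)).card = n - c := by
  have himg : (Finset.univ : Finset (Fin n)).filter (fun y => c ≤ y.1) =
      (Finset.univ : Finset (Fin (n - c))).image
        (fun i => (⟨c + i.1, by have := i.isLt; omega⟩ : Fin n)) := by
    ext y
    simp only [Finset.mem_filter, Finset.mem_univ, true_and, Finset.mem_image]
    constructor
    · intro hy
      have := y.isLt
      exact ⟨⟨y.1 - c, by omega⟩, by simp [Fin.ext_iff]; omega⟩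
    · rintro ⟨i, rfl⟩
      simp
  rw [himg, Finset.card_image_of_injective, Finset.card_univ, Fintype.card_fin]
  intro i j hij
  simp only [Fin.ext_iff] at hij ⊢
  omega

lemma Wg_nbr_small {x : Fin n} (hx : x.1 < c) :
    (Wg n c).neighborFinset x = Finset.univ.filter (fun y => c ≤ y.1) := by
  ext y
  rw [SimpleGraph.mem_neighborFinset, Wg_adj]
  simp only [Finset.mem_filter, Finset.mem_univ, true_and]
  omega

lemma Wg_nbr_big {x : Fin n} (hx : c ≤ x.1) :
    (Wg n c).neighborFinset x = Finset.univ.filter (fun y => y.1 < c) := by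
  ext y
  rw [SimpleGraph.mem_neighborFinset, Wg_adj]
  simp only [Finset.mem_filter, Finset.mem_univ, true_and]
  omega

lemma Wg_free {c' d' : ℕ} (hc : 0 < c) (hc' : c ≤ c') (hd' : c ≤ d') (hcn : c ≤ n) :
    ¬ Contains (doubleStar c' d') (Wg n c) := by
  rw [contains_iff_conf]
  rintro ⟨⟨u, v, C, D⟩, ht⟩
  rw [mem_conf] at ht
  obtain ⟨hadj, hC, hcc, hD, hcd, -⟩ := ht
  rcases (Wg_adj.mp hadj) with ⟨hu, hv⟩ | ⟨hv, hu⟩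
  · -- u small, v big: D sits in the small side minus u
    have hsub : D ⊆ (Finset.univ.filter (fun y : Fin n => y.1 < c)).erase u := by
      intro x hx
      have := hD hx
      rwa [Wg_nbr_big hv] at this
    have hle := Finset.card_le_card hsub
    rw [Finset.card_erase_of_mem (by simp [hu]), card_filter_small hcn, hcd] at hle
    omega
  · -- u big, v small: C sits in the small side minus v
    have hsub : C ⊆ (Finset.univ.filter (fun y : Fin n => y.1 < c)).erase v := by
      intro x hx
      have := hC hx
      rwa [Wg_nbr_big hu] at this
    have hle := Finset.card_le_card hsub
    rw [Finset.card_erase_of_mem (by simp [hv]), card_filter_small hcn, hcc] at hle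
    omega

lemma confUV_Wg_full {a b : ℕ} {u v : Fin n} (hadj : (Wg n c).Adj u v) :
    (confUV (Wg n c) a b u v).card =
      (((Wg n c).neighborFinset u).erase v).card.choose a *
        (((Wg n c).neighborFinset v).erase u).card.choose b := by
  have hdisj : ∀ q ∈ ((((Wg n c).neighborFinset u).erase v).powersetCard a ×ˢ
      (((Wg n c).neighborFinset v).erase u).powersetCard b), Disjoint q.1 q.2 := by
    rintro ⟨A, B⟩ hq
    rw [Finset.mem_product] at hq
    obtain ⟨hA, hB⟩ := hq
    rw [Finset.mem_powersetCard] at hA hB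
    rw [Finset.disjoint_left]
    intro x hxA hxB
    have h1 := hA.1 hxA
    have h2 := hB.1 hxB
    rw [Finset.mem_erase, SimpleGraph.mem_neighborFinset] at h1 h2
    rcases (Wg_adj.mp hadj) with ⟨hu, hv⟩ | ⟨hv, hu⟩ <;>
      rcases (Wg_adj.mp h1.2) with ⟨h1a, h1b⟩ | ⟨h1a, h1b⟩ <;>
        rcases (Wg_adj.mp h2.2) with ⟨h2a, h2b⟩ | ⟨h2a, h2b⟩ <;> omega
  rw [confUV, Finset.filter_true_of_mem hdisj, Finset.card_product,
    Finset.card_powersetCard, Finset.card_powersetCard]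

lemma conf_Wg_card (a b : ℕ) (hc : 0 < c) (hcn : c ≤ n) :
    (conf (Wg n c) a b).card = c * (n - c) *
      ((n - c - 1).choose a * (c - 1).choose b + (c - 1).choose a * (n - c - 1).choose b) := by
  rw [conf_card_eq]
  have hsplit : Epairs (Wg n c) =
      ((Finset.univ.filter (fun y : Fin n => y.1 < c)) ×ˢ
        (Finset.univ.filter (fun y : Fin n => c ≤ y.1))) ∪
      ((Finset.univ.filter (fun y : Fin n => c ≤ y.1)) ×ˢ
        (Finset.univ.filter (fun y : Fin n => y.1 < c))) := by
    ext p
    simp only [Epairs, Finset.mem_filter, Finset.mem_product, Finset.mem_union,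
      Finset.mem_univ, true_and, Wg_adj]
    try simp only [Finset.mem_filter, Finset.mem_univ, true_and]
    try tauto
  have hdisj : Disjoint
      ((Finset.univ.filter (fun y : Fin n => y.1 < c)) ×ˢ
        (Finset.univ.filter (fun y : Fin n => c ≤ y.1)))
      ((Finset.univ.filter (fun y : Fin n => c ≤ y.1)) ×ˢ
        (Finset.univ.filter (fun y : Fin n => y.1 < c))) := by
    rw [Finset.disjoint_left]
    rintro ⟨x, y⟩ h1 h2
    rw [Finset.mem_product] at h1 h2
    simp only [Finset.mem_filter, Finset.mem_univ, true_and] at h1 h2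
    omega
  rw [hsplit, Finset.sum_union hdisj]
  have hsb : ∀ p ∈ ((Finset.univ.filter (fun y : Fin n => y.1 < c)) ×ˢ
      (Finset.univ.filter (fun y : Fin n => c ≤ y.1))),
      (confUV (Wg n c) a b p.1 p.2).card = (n - c - 1).choose a * (c - 1).choose b := by
    rintro ⟨u, v⟩ hp
    rw [Finset.mem_product] at hp
    simp only [Finset.mem_filter, Finset.mem_univ, true_and] at hp
    obtain ⟨hu, hv⟩ := hp
    have hadj : (Wg n c).Adj u v := Or.inl ⟨hu, hv⟩
    rw [confUV_Wg_full hadj]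
    rw [Wg_nbr_small hu, Wg_nbr_big hv]
    rw [Finset.card_erase_of_mem (by simp [hv]), Finset.card_erase_of_mem (by simp [hu]),
      card_filter_big hcn, card_filter_small hcn]
  have hbs : ∀ p ∈ ((Finset.univ.filter (fun y : Fin n => c ≤ y.1)) ×ˢ
      (Finset.univ.filter (fun y : Fin n => y.1 < c))),
      (confUV (Wg n c) a b p.1 p.2).card = (c - 1).choose a * (n - c - 1).choose b := by
    rintro ⟨u, v⟩ hp
    rw [Finset.mem_product] at hp
    simp only [Finset.mem_filter, Finset.mem_univ, true_and] at hp
    obtain ⟨hu, hv⟩ := hp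
    have hadj : (Wg n c).Adj u v := Or.inr ⟨hv, hu⟩
    rw [confUV_Wg_full hadj]
    rw [Wg_nbr_big hu, Wg_nbr_small hv]
    rw [Finset.card_erase_of_mem (by simp [hv]), Finset.card_erase_of_mem (by simp [hu]),
      card_filter_big hcn, card_filter_small hcn]
  rw [Finset.sum_congr rfl hsb, Finset.sum_congr rfl hbs, Finset.sum_const, Finset.sum_const,
    Finset.card_product, Finset.card_product, card_filter_small hcn, card_filter_big hcn,
    smul_eq_mul, smul_eq_mul]
  ring

end wgraph

section chooseLemmas


lemma choose_lower {k : ℕ} (hk : 1 ≤ k) : ∀ m : ℕ, m + 1 - k ≤ m.choose k := by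
  induction k with
  | zero => omega
  | succ k ih =>
    intro m
    rcases Nat.eq_or_lt_of_le hk with h | h
    · -- k = 0, so k+1 = 1
      have : k = 0 := by omega
      subst this
      simp [Nat.choose_one_right]
    · have hk1 : 1 ≤ k := by omega
      match m with
      | 0 => simp
      | m + 1 =>
        rw [Nat.choose_succ_succ]
        have := ih hk1 m
        omega

lemma choose_ratio {k m : ℕ} (h : 2 * k + 2 ≤ m) : m.choose k ≤ 2 * (m - 1).choose k := by
  match k with
  | 0 => simp
  | k + 1 =>
    match m with
    | 0 => omega
    | m + 1 =>
      rw [Nat.choose_succ_succ]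
      have hmono : m.choose k ≤ m.choose (k + 1) := by
        apply Nat.choose_le_succ_of_lt_half_left
        omega
      simp only [Nat.add_sub_cancel, Nat.succ_eq_add_one] at *
      omega

lemma choose_pow_ratio {k : ℕ} : ∀ (j m : ℕ), 2 * k + 2 + j ≤ m →
    m.choose k ≤ 2 ^ j * (m - j).choose k := by
  intro j
  induction j with
  | zero => intro m _; simpa using le_rfl
  | succ j ih =>
    intro m hm
    calc m.choose k ≤ 2 * (m - 1).choose k := choose_ratio (by omega)
      _ ≤ 2 * (2 ^ j * ((m - 1) - j).choose k) := by
          have := ih (m - 1) (by omega)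
          omega
      _ = 2 ^ (j + 1) * (m - (j + 1)).choose k := by
          rw [show m - 1 - j = m - (j + 1) by omega]
          ring

lemma choose_sub_le {k : ℕ} : ∀ (j m : ℕ),
    m.choose (k + 1) ≤ (m - j).choose (k + 1) + j * (m - 1).choose k := by
  intro j
  induction j with
  | zero => intro m; simp
  | succ j ih =>
    intro m
    have step : (m - j).choose (k + 1) ≤ (m - (j + 1)).choose (k + 1) + (m - 1).choose k := by
      match hmj : m - j with
      | 0 =>
        have : m - (j + 1) = 0 := by omega
        rw [this]
        omega
      | mj + 1 =>
        rw [Nat.choose_succ_succ]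
        have h1 : m - (j + 1) = mj := by omega
        have h2 : mj ≤ m - 1 := by omega
        rw [h1]
        have := Nat.choose_le_choose k h2
        simp only [Nat.succ_eq_add_one] at *
        omega
    calc m.choose (k + 1) ≤ (m - j).choose (k + 1) + j * (m - 1).choose k := ih m
      _ ≤ ((m - (j + 1)).choose (k + 1) + (m - 1).choose k) + j * (m - 1).choose k :=
          Nat.add_le_add_right step _
      _ = (m - (j + 1)).choose (k + 1) + (j + 1) * (m - 1).choose k := by ring

/-- the key eventual inequality -/
lemma chooseL {c K r : ℕ} (hc : 2 ≤ c) (hr : 1 ≤ r) :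
    ∀ n, (c * c * 2 ^ c + 2 * K * (r + 1)) * (r + 1) + 2 * c + 2 * r + 4 ≤ n →
    (c - 1) * n.choose (r + 1) + K * n ≤ c * (n - c).choose (r + 1) := by
  intro n hn
  set X := c * c * 2 ^ c + 2 * K * (r + 1) with hX
  -- basic size facts
  have hnc : c + r + 1 ≤ n - c := by omega
  -- step 1 : A4
  have s1 : n.choose (r + 1) ≤ (n - c).choose (r + 1) + c * (n - 1).choose r :=
    choose_sub_le c n
  -- step 2 : A3 on (n-1), j = c - 1
  have s2 : (n - 1).choose r ≤ 2 ^ (c - 1) * (n - c).choose r := by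
    have := choose_pow_ratio (k := r) (c - 1) (n - 1) (by omega)
    rw [show n - 1 - (c - 1) = n - c by omega] at this
    exact this
  -- step 3 : K * n ≤ 2K(r+1)·(n-c).choose r
  have hch1 : 1 ≤ (n - c).choose r := Nat.choose_pos (by omega)
  have hlow : n - c + 1 - r ≤ (n - c).choose r := choose_lower hr _
  have s3 : n - c ≤ (r + 1) * (n - c).choose r := by
    have : (r + 1) * (n - c).choose r = (n - c).choose r + r * (n - c).choose r :=
      by ring
    have h4 : r * 1 ≤ r * (n - c).choose r := Nat.mul_le_mul_left _ hch1
    omega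
  have s3' : K * n ≤ 2 * K * (r + 1) * (n - c).choose r := by
    have h5 : n ≤ 2 * (n - c) := by omega
    calc K * n ≤ K * (2 * (n - c)) := Nat.mul_le_mul_left _ h5
      _ = 2 * K * (n - c) := by ring
      _ ≤ 2 * K * ((r + 1) * (n - c).choose r) := Nat.mul_le_mul_left _ s3
      _ = 2 * K * (r + 1) * (n - c).choose r := by ring
  -- step 4 : core comparison  X * (n-c).choose r ≤ (n-c).choose (r+1)
  have s4 : X * (n - c).choose r ≤ (n - c).choose (r + 1) := by
    have hid : (n - c).choose (r + 1) * (r + 1) = (n - c).choose r * (n - c - r) :=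
      Nat.choose_succ_right_eq (n - c) r
    have hXr : X * (r + 1) ≤ n - c - r := by omega
    refine Nat.le_of_mul_le_mul_left ?_ (show 0 < r + 1 by omega)
    calc (r + 1) * (X * (n - c).choose r) = (X * (r + 1)) * (n - c).choose r := by ring
      _ ≤ (n - c - r) * (n - c).choose r := Nat.mul_le_mul_right _ hXr
      _ = (n - c).choose (r + 1) * (r + 1) := by rw [hid]; ring
      _ = (r + 1) * (n - c).choose (r + 1) := by ring
  -- assemble
  have hup : (c - 1) * (c * (n - 1).choose r) ≤ c * c * 2 ^ c * (n - c).choose r := by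
    calc (c - 1) * (c * (n - 1).choose r) ≤ c * (c * (n - 1).choose r) := by
          apply Nat.mul_le_mul_right; omega
      _ = c * c * (n - 1).choose r := by ring
      _ ≤ c * c * (2 ^ (c - 1) * (n - c).choose r) := Nat.mul_le_mul_left _ s2
      _ ≤ c * c * (2 ^ c * (n - c).choose r) := by
          apply Nat.mul_le_mul_left
          apply Nat.mul_le_mul_right
          apply Nat.pow_le_pow_right <;> omega
      _ = c * c * 2 ^ c * (n - c).choose r := by ring
  calc (c - 1) * n.choose (r + 1) + K * n
      ≤ (c - 1) * ((n - c).choose (r + 1) + c * (n - 1).choose r) + K * n := by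
        apply Nat.add_le_add_right
        exact Nat.mul_le_mul_left _ s1
    _ = (c - 1) * (n - c).choose (r + 1) + (c - 1) * (c * (n - 1).choose r) + K * n := by ring
    _ ≤ (c - 1) * (n - c).choose (r + 1) + c * c * 2 ^ c * (n - c).choose r +
          2 * K * (r + 1) * (n - c).choose r := by
        have := s3'
        omega
    _ = (c - 1) * (n - c).choose (r + 1) + X * (n - c).choose r := by rw [hX]; ring
    _ ≤ (c - 1) * (n - c).choose (r + 1) + (n - c).choose (r + 1) := by omega
    _ = c * (n - c).choose (r + 1) := by
        have : c - 1 + 1 = c := by omega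
        calc (c - 1) * (n - c).choose (r + 1) + (n - c).choose (r + 1)
            = (c - 1 + 1) * (n - c).choose (r + 1) := by ring
          _ = c * (n - c).choose (r + 1) := by rw [this]


end chooseLemmas

section pairhelpers

variable {G : SimpleGraph V}

lemma card_pairs_right (G : SimpleGraph V) (S : Finset V) :
    ((Epairs G).filter (fun p => p.2 ∈ S)).card = ∑ v ∈ S, G.degree v := by
  have hdec : (Epairs G).filter (fun p => p.2 ∈ S) =
      S.biUnion (fun v => (G.neighborFinset v).image (fun u => (u, v))) := by
    ext ⟨u, v⟩
    simp only [Epairs, Finset.filter_filter, Finset.mem_filter, Finset.mem_product,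
      Finset.mem_univ, true_and, Finset.mem_biUnion, Finset.mem_image,
      SimpleGraph.mem_neighborFinset]
    constructor
    · rintro ⟨hadj, hv⟩
      exact ⟨v, hv, u, hadj.symm, rfl⟩
    · rintro ⟨v', hv', u', hadj, heq⟩
      obtain ⟨e1, e2⟩ : u' = u ∧ v' = v := by simpa [Prod.ext_iff] using heq
      subst e1; subst e2
      exact ⟨hadj.symm, hv'⟩
  rw [hdec, Finset.card_biUnion]
  · apply Finset.sum_congr rfl
    intro v _
    rw [Finset.card_image_of_injective _ (fun x y hxy => by
      simpa [Prod.ext_iff] using hxy)]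
    rfl
  · intro v _ v' _ hvv
    simp only [Function.onFun]
    rw [Finset.disjoint_left]
    rintro ⟨x, y⟩ h1 h2
    rw [Finset.mem_image] at h1 h2
    obtain ⟨u1, -, heq1⟩ := h1
    obtain ⟨u2, -, heq2⟩ := h2
    apply hvv
    have e1 : y = v := by simpa [Prod.ext_iff] using congrArg Prod.snd heq1.symm
    have e2 : y = v' := by simpa [Prod.ext_iff] using congrArg Prod.snd heq2.symm
    rw [← e1, e2]

lemma card_pairs_both (G : SimpleGraph V) (S S' : Finset V) :
    ((Epairs G).filter (fun p => p.1 ∈ S ∧ p.2 ∈ S')).card =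
      ∑ u ∈ S, (G.neighborFinset u ∩ S').card := by
  have hdec : (Epairs G).filter (fun p => p.1 ∈ S ∧ p.2 ∈ S') =
      S.biUnion (fun u => ((G.neighborFinset u) ∩ S').image (fun v => (u, v))) := by
    ext ⟨u, v⟩
    simp only [Epairs, Finset.filter_filter, Finset.mem_filter, Finset.mem_product,
      Finset.mem_univ, true_and, Finset.mem_biUnion, Finset.mem_image,
      Finset.mem_inter, SimpleGraph.mem_neighborFinset]
    constructor
    · rintro ⟨hadj, hu, hv⟩
      exact ⟨u, hu, v, ⟨hadj, hv⟩, rfl⟩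
    · rintro ⟨u', hu', v', ⟨hadj, hv'⟩, heq⟩
      obtain ⟨e1, e2⟩ : u' = u ∧ v' = v := by simpa [Prod.ext_iff] using heq
      subst e1; subst e2
      exact ⟨hadj, hu', hv'⟩
  rw [hdec, Finset.card_biUnion]
  · apply Finset.sum_congr rfl
    intro u _
    rw [Finset.card_image_of_injective _ (fun x y hxy => by
      simpa [Prod.ext_iff] using hxy)]
  · intro u _ u' _ huu
    simp only [Function.onFun]
    rw [Finset.disjoint_left]
    rintro ⟨x, y⟩ h1 h2
    rw [Finset.mem_image] at h1 h2
    obtain ⟨v1, -, heq1⟩ := h1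
    obtain ⟨v2, -, heq2⟩ := h2
    apply huu
    have e1 : x = u := by simpa [Prod.ext_iff] using congrArg Prod.fst heq1.symm
    have e2 : x = u' := by simpa [Prod.ext_iff] using congrArg Prod.fst heq2.symm
    rw [← e1, e2]

end pairhelpers

section mainineq

/-- explicit threshold -/
def N0 (a b c d : ℕ) : ℕ :=
  2 * ((c + d + 2).choose a * (c + d + 2).choose b * (c + d + 3) + b + 2) +
    (c * c * 2 ^ c + 2 * ((c + d + 2).choose a * (c + d + 2).choose b * (c + d + 2)) *
      (b + 1)) * (b + 1) + 2 * c + 2 * b + 4 + (c + d + 10)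


/-- weight function for degree-`m` big vertices -/
def gfun (c a b m : ℕ) : ℕ :=
  (c - 1).choose a * (m - 1).choose b + (m - 1).choose a * (c - 1).choose b

lemma gfun_mono (c a b : ℕ) {m m' : ℕ} (h : m ≤ m') : gfun c a b m ≤ gfun c a b m' := by
  unfold gfun
  have h1 : (m - 1).choose b ≤ (m' - 1).choose b := Nat.choose_le_choose _ (by omega)
  have h2 : (m - 1).choose a ≤ (m' - 1).choose a := Nat.choose_le_choose _ (by omega)
  have h3 := Nat.mul_le_mul_left ((c - 1).choose a) h1
  have h4 := Nat.mul_le_mul_right ((c - 1).choose b) h2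
  omega

lemma mul_choose_pred (m k : ℕ) : m * (m - 1).choose k = m.choose (k + 1) * (k + 1) := by
  match m with
  | 0 => simp
  | m + 1 =>
    have := Nat.add_one_mul_choose_eq m k
    simpa using this

lemma conf_le_main {a b c d n : ℕ} (ha : 0 < a) (hab : a ≤ b) (hac : a < c) (hcd : c ≤ d)
    (hn : N0 a b c d ≤ n) (G : SimpleGraph (Fin n))
    (hfree : ¬ Contains (doubleStar c d) G) :
    (conf G a b).card ≤ (conf (Wg n c) a b).card := by
  have hb : 0 < b := lt_of_lt_of_le ha hab
  have hc2 : 2 ≤ c := by omega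
  set κ := (c + d + 2).choose a * (c + d + 2).choose b with hκ
  set K := κ * (c + d + 2) with hK
  set Ca := (c - 1).choose a with hCa
  set Cb := (c - 1).choose b with hCb
  have hCa1 : 1 ≤ Ca := by rw [hCa]; exact Nat.choose_pos (by omega)
  -- unpack the threshold
  have hN0 : 2 * (κ * (c + d + 3) + b + 2) + ((c * c * 2 ^ c + 2 * K * (b + 1)) * (b + 1)) +
      2 * c + 2 * b + 4 + (c + d + 10) ≤ n := by
    have e : N0 a b c d = 2 * (κ * (c + d + 3) + b + 2) +
        ((c * c * 2 ^ c + 2 * K * (b + 1)) * (b + 1)) + 2 * c + 2 * b + 4 + (c + d + 10) := by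
      rw [hK, hκ]; unfold N0; ring
    omega
  have hnb : (c * c * 2 ^ c + 2 * K * (b + 1)) * (b + 1) + 2 * c + 2 * b + 4 ≤ n := by omega
  have hna : (c * c * 2 ^ c + 2 * 0 * (a + 1)) * (a + 1) + 2 * c + 2 * a + 4 ≤ n := by
    have e1 : (c * c * 2 ^ c + 2 * 0 * (a + 1)) * (a + 1) = c * c * 2 ^ c * (a + 1) := by ring
    have e2 : c * c * 2 ^ c * (a + 1) ≤ c * c * 2 ^ c * (b + 1) :=
      Nat.mul_le_mul_left _ (by omega)
    have e3 : c * c * 2 ^ c * (b + 1) ≤ (c * c * 2 ^ c + 2 * K * (b + 1)) * (b + 1) :=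
      Nat.mul_le_mul_right _ (by omega)
    omega
  -- the big vertex set
  set Bs := Finset.univ.filter (fun x : Fin n => c + d + 2 ≤ G.degree x) with hBs
  set Ls := Finset.univ \ Bs with hLs
  set s := Bs.card with hs
  have hsn : s ≤ n := by
    rw [hs]
    calc Bs.card ≤ (Finset.univ : Finset (Fin n)).card := Finset.card_le_card (Finset.subset_univ _)
      _ = n := by simp
  set D := n - s with hD
  have hLscard : Ls.card = D := by
    rw [hLs, hD, hs, Finset.card_sdiff_of_subset (Finset.subset_univ _)]
    simp
  have hmemB : ∀ v, v ∈ Bs ↔ c + d + 2 ≤ G.degree v := by intro v; rw [hBs]; simp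
  have hmemL : ∀ v, v ∈ Ls ↔ ¬ (c + d + 2 ≤ G.degree v) := by
    intro v; rw [hLs]; simp [hBs]
  have hBadj : ∀ v ∈ Bs, ∀ u, G.Adj u v → G.degree u ≤ c :=
    fun v hv u hadj => free_deg_le hfree hadj ((hmemB v).mp hv)
  have hnbrL : ∀ v ∈ Bs, G.neighborFinset v ⊆ Ls := by
    intro v hv u hu
    rw [SimpleGraph.mem_neighborFinset] at hu
    rw [hmemL]
    have := hBadj v hv u hu.symm
    omega
  have hdegB : ∀ v ∈ Bs, G.degree v ≤ D := by
    intro v hv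
    calc G.degree v = (G.neighborFinset v).card := rfl
      _ ≤ Ls.card := Finset.card_le_card (hnbrL v hv)
      _ = D := hLscard
  -- the pieces of the sum
  set E1 := (Epairs G).filter (fun p => p.2 ∈ Bs) with hE1
  set Er := (Epairs G).filter (fun p => ¬ p.2 ∈ Bs) with hEr
  set E2 := Er.filter (fun p => p.1 ∈ Bs) with hE2
  set E3 := Er.filter (fun p => ¬ p.1 ∈ Bs) with hE3
  have hpairmem : ∀ p ∈ Epairs G, G.Adj p.1 p.2 := by
    intro p hp
    simp only [Epairs, Finset.mem_filter] at hp
    exact hp.2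
  have hTsplit : ∑ p ∈ Epairs G, (confUV G a b p.1 p.2).card =
      ∑ p ∈ E1, (confUV G a b p.1 p.2).card + (∑ p ∈ E2, (confUV G a b p.1 p.2).card +
        ∑ p ∈ E3, (confUV G a b p.1 p.2).card) := by
    rw [hE2, hE3, hE1, hEr]
    rw [Finset.sum_filter_add_sum_filter_not, Finset.sum_filter_add_sum_filter_not]
  -- per-term bounds
  have hbound1 : ∀ p ∈ E1, (confUV G a b p.1 p.2).card ≤ Ca * (D - 1).choose b := by
    intro p hp
    rw [hE1, Finset.mem_filter] at hp
    obtain ⟨hpE, hv⟩ := hp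
    have hadj := hpairmem p hpE
    have hu : G.degree p.1 ≤ c := hBadj _ hv _ hadj
    have hvD : G.degree p.2 ≤ D := hdegB _ hv
    have hvbig : c + d + 2 ≤ G.degree p.2 := (hmemB _).mp hv
    calc (confUV G a b p.1 p.2).card
        ≤ (G.degree p.1 - 1).choose a * (G.degree p.2 - 1).choose b := confUV_card_le hadj
      _ ≤ Ca * (D - 1).choose b := by
          apply Nat.mul_le_mul
          · rw [hCa]; exact Nat.choose_le_choose _ (by omega)
          · exact Nat.choose_le_choose _ (by omega)
  have hbound2 : ∀ p ∈ E2, (confUV G a b p.1 p.2).card ≤ (D - 1).choose a * Cb := by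
    intro p hp
    rw [hE2, Finset.mem_filter, hEr, Finset.mem_filter] at hp
    obtain ⟨⟨hpE, -⟩, hu⟩ := hp
    have hadj := hpairmem p hpE
    have hv : G.degree p.2 ≤ c := hBadj _ hu _ hadj.symm
    have huD : G.degree p.1 ≤ D := hdegB _ hu
    have hubig : c + d + 2 ≤ G.degree p.1 := (hmemB _).mp hu
    calc (confUV G a b p.1 p.2).card
        ≤ (G.degree p.1 - 1).choose a * (G.degree p.2 - 1).choose b := confUV_card_le hadj
      _ ≤ (D - 1).choose a * Cb := by
          apply Nat.mul_le_mul
          · exact Nat.choose_le_choose _ (by omega)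
          · rw [hCb]; exact Nat.choose_le_choose _ (by omega)
  have hbound3 : ∀ p ∈ E3, (confUV G a b p.1 p.2).card ≤ κ := by
    intro p hp
    rw [hE3, Finset.mem_filter, hEr, Finset.mem_filter] at hp
    obtain ⟨⟨hpE, hv2⟩, hu2⟩ := hp
    have hadj := hpairmem p hpE
    have hu : ¬ (c + d + 2 ≤ G.degree p.1) := by
      intro hcon; exact hu2 ((hmemB _).mpr hcon)
    have hv : ¬ (c + d + 2 ≤ G.degree p.2) := by
      intro hcon; exact hv2 ((hmemB _).mpr hcon)
    calc (confUV G a b p.1 p.2).card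
        ≤ (G.degree p.1 - 1).choose a * (G.degree p.2 - 1).choose b := confUV_card_le hadj
      _ ≤ κ := by
          rw [hκ]
          apply Nat.mul_le_mul
          · exact Nat.choose_le_choose _ (by omega)
          · exact Nat.choose_le_choose _ (by omega)
  have hS1 : ∑ p ∈ E1, (confUV G a b p.1 p.2).card ≤ E1.card * (Ca * (D - 1).choose b) := by
    have := Finset.sum_le_card_nsmul E1 _ _ hbound1
    simpa [smul_eq_mul] using this
  have hS2 : ∑ p ∈ E2, (confUV G a b p.1 p.2).card ≤ E2.card * ((D - 1).choose a * Cb) := by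
    have := Finset.sum_le_card_nsmul E2 _ _ hbound2
    simpa [smul_eq_mul] using this
  have hS3 : ∑ p ∈ E3, (confUV G a b p.1 p.2).card ≤ E3.card * κ := by
    have := Finset.sum_le_card_nsmul E3 _ _ hbound3
    simpa [smul_eq_mul] using this
  -- cardinalities
  set P := ∑ v ∈ Bs, G.degree v with hP
  have hE1card : E1.card = P := by rw [hE1, hP]; exact card_pairs_right G Bs
  have hE2card : E2.card ≤ P := by
    have hsub : E2 ⊆ (Epairs G).filter (fun p => p.1 ∈ Bs ∧ p.2 ∈ Finset.univ) := by
      intro p hp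
      rw [hE2, Finset.mem_filter, hEr, Finset.mem_filter] at hp
      rw [Finset.mem_filter]
      exact ⟨hp.1.1, hp.2, Finset.mem_univ _⟩
    have hle := Finset.card_le_card hsub
    rw [card_pairs_both] at hle
    have e : ∀ u ∈ Bs, (G.neighborFinset u ∩ Finset.univ).card = G.degree u := by
      intro u _
      rw [Finset.inter_univ]
      rfl
    rw [Finset.sum_congr rfl e] at hle
    exact hle
  set W := ∑ u ∈ Ls, (G.neighborFinset u ∩ Ls).card with hW
  have hmemLiff : ∀ x : Fin n, x ∈ Ls ↔ x ∉ Bs := by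
    intro x; rw [hLs]; simp
  have hE3card : E3.card = W := by
    have e : E3 = (Epairs G).filter (fun p => p.1 ∈ Ls ∧ p.2 ∈ Ls) := by
      rw [hE3, hEr, Finset.filter_filter]
      apply Finset.filter_congr
      intro p _
      rw [hmemLiff p.1, hmemLiff p.2]
      tauto
    rw [e, hW, card_pairs_both]
  have hPge : s * (c + d + 2) ≤ P := by
    have := Finset.card_nsmul_le_sum Bs (fun v => G.degree v) (c + d + 2)
      (fun v hv => (hmemB v).mp hv)
    rw [smul_eq_mul] at this
    rw [hP, hs]
    calc s * (c + d + 2) = Bs.card * (c + d + 2) := by rw [hs]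
      _ ≤ _ := this
  -- attached vertices
  set La := Ls.filter (fun u => (G.neighborFinset u ∩ Bs).Nonempty) with hLa
  set σ := La.card with hσ
  have hσD : σ ≤ D := by
    rw [hσ, hLa, ← hLscard]
    exact Finset.card_le_card (Finset.filter_subset _ _)
  have hPk : P = ∑ u ∈ La, (G.neighborFinset u ∩ Bs).card := by
    have e1 : E1 = (Epairs G).filter (fun p => p.1 ∈ Ls ∧ p.2 ∈ Bs) := by
      rw [hE1]
      apply Finset.filter_congr
      intro p hp
      constructor
      · intro h2
        refine ⟨?_, h2⟩
        apply hnbrL p.2 h2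
        rw [SimpleGraph.mem_neighborFinset]
        exact (hpairmem p hp).symm
      · exact fun h => h.2
    have e2 : (∑ u ∈ La, (G.neighborFinset u ∩ Bs).card) =
        ∑ u ∈ Ls, (G.neighborFinset u ∩ Bs).card := by
      apply Finset.sum_subset
      · rw [hLa]; exact Finset.filter_subset _ _
      · intro u hu hnu
        rw [hLa, Finset.mem_filter] at hnu
        push_neg at hnu
        · rw [hnu hu, Finset.card_empty]
    rw [e2, ← card_pairs_both, ← e1, hE1card]
  set Watt := ∑ u ∈ La, (G.neighborFinset u ∩ Ls).card with hWatt
  have hattach : ∀ u ∈ La,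
      (G.neighborFinset u ∩ Bs).card + (G.neighborFinset u ∩ Ls).card ≤ c := by
    intro u hu
    rw [hLa, Finset.mem_filter] at hu
    obtain ⟨huL, v, hv⟩ := hu
    rw [Finset.mem_inter, SimpleGraph.mem_neighborFinset] at hv
    have hdegu : G.degree u ≤ c := hBadj v hv.2 u hv.1
    have hsplit2 : (G.neighborFinset u ∩ Bs).card + (G.neighborFinset u ∩ Ls).card =
        G.degree u := by
      have e : G.neighborFinset u ∩ Ls = G.neighborFinset u \ Bs := by
        rw [hLs]; ext x; simp
      rw [e]
      exact Finset.card_inter_add_card_sdiff _ _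
    omega
  have hPWatt : P + Watt ≤ c * σ := by
    rw [hPk, hWatt, ← Finset.sum_add_distrib]
    have := Finset.sum_le_card_nsmul La _ c hattach
    rw [smul_eq_mul] at this
    calc (∑ u ∈ La, ((G.neighborFinset u ∩ Bs).card + (G.neighborFinset u ∩ Ls).card))
        ≤ La.card * c := this
      _ = c * σ := by rw [hσ]; ring
  have hWattσ : Watt ≤ c * σ := le_trans (Nat.le_add_left _ _) hPWatt
  have hWsplit : W ≤ Watt + (c + d + 2) * (D - σ) := by
    have t := Finset.sum_filter_add_sum_filter_not Ls
      (fun u => (G.neighborFinset u ∩ Bs).Nonempty)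
      (fun u => (G.neighborFinset u ∩ Ls).card)
    have hcard2 : (Ls.filter (fun u => ¬ (G.neighborFinset u ∩ Bs).Nonempty)).card = D - σ := by
      have h3 := Finset.card_filter_add_card_filter_not (s := Ls)
        (p := fun u => (G.neighborFinset u ∩ Bs).Nonempty)
      rw [hLscard] at h3
      have h4 : (Ls.filter (fun u => (G.neighborFinset u ∩ Bs).Nonempty)).card = σ := by
        rw [hσ, hLa]
      omega
    have hrest : ∑ u ∈ Ls.filter (fun u => ¬ (G.neighborFinset u ∩ Bs).Nonempty),
        (G.neighborFinset u ∩ Ls).card ≤ (c + d + 2) * (D - σ) := by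
      have hb2 : ∀ u ∈ Ls.filter (fun u => ¬ (G.neighborFinset u ∩ Bs).Nonempty),
          (G.neighborFinset u ∩ Ls).card ≤ c + d + 2 := by
        intro u hu
        rw [Finset.mem_filter] at hu
        have hdegu : ¬ (c + d + 2 ≤ G.degree u) := (hmemL u).mp hu.1
        calc (G.neighborFinset u ∩ Ls).card ≤ (G.neighborFinset u).card :=
              Finset.card_le_card (Finset.inter_subset_left)
          _ = G.degree u := rfl
          _ ≤ c + d + 2 := by omega
      have := Finset.sum_le_card_nsmul _ _ _ hb2
      rw [smul_eq_mul, hcard2] at this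
      calc _ ≤ (D - σ) * (c + d + 2) := this
        _ = (c + d + 2) * (D - σ) := by ring
    have hWatteq : (∑ u ∈ Ls.filter (fun u => (G.neighborFinset u ∩ Bs).Nonempty),
        (G.neighborFinset u ∩ Ls).card) = Watt := by rw [hWatt, hLa]
    rw [hW]
    omega
  -- global bound on the configuration count
  have hT : (conf G a b).card ≤ P * (Ca * (D - 1).choose b) +
      (P * ((D - 1).choose a * Cb) + W * κ) := by
    rw [conf_card_eq]
    have m2 : E2.card * ((D - 1).choose a * Cb) ≤ P * ((D - 1).choose a * Cb) :=
      Nat.mul_le_mul_right _ hE2card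
    rw [hE1card] at hS1
    rw [hE3card] at hS3
    omega
  -- the right-hand side
  rw [conf_Wg_card a b (by omega) (by omega)]
  have hgRHS : c * (n - c) * ((n - c - 1).choose a * (c - 1).choose b +
      (c - 1).choose a * (n - c - 1).choose b) = c * ((n - c) * gfun c a b (n - c)) := by
    unfold gfun
    ring
  rw [hgRHS]
  have hgDeq : P * (Ca * (D - 1).choose b) + P * ((D - 1).choose a * Cb) =
      P * gfun c a b D := by
    unfold gfun
    rw [← hCa, ← hCb]
    ring
  by_cases hcase : c ≤ s
  · -- many big vertices
    have hPD : P ≤ c * D := by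
      have h1 : P ≤ c * σ := le_trans (Nat.le_add_right _ _) hPWatt
      exact le_trans h1 (Nat.mul_le_mul_left _ hσD)
    have hsD : s ≤ D := by
      have h1 : s * (c + d + 2) ≤ D * (c + d + 2) := by
        calc s * (c + d + 2) ≤ P := hPge
          _ ≤ c * D := hPD
          _ ≤ (c + d + 2) * D := Nat.mul_le_mul_right _ (by omega)
          _ = D * (c + d + 2) := by ring
      exact Nat.le_of_mul_le_mul_right h1 (by omega)
    have hn2D : n ≤ 2 * D := by omega
    have hgDlow : D - b ≤ gfun c a b D := by
      have h1 : (D - 1) + 1 - b ≤ (D - 1).choose b := choose_lower hb _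
      have h2 : (D - 1).choose b ≤ Ca * (D - 1).choose b :=
        Nat.le_mul_of_pos_left _ (by omega)
      unfold gfun
      rw [← hCa, ← hCb]
      omega
    have hDbig : κ * (c + d + 3) + b + 2 ≤ D := by omega
    have hκgD1 : κ * (c + d + 2) ≤ c * gfun c a b D := by
      calc κ * (c + d + 2) ≤ κ * (c + d + 3) := Nat.mul_le_mul_left _ (by omega)
        _ ≤ D - b := by omega
        _ ≤ gfun c a b D := hgDlow
        _ ≤ c * gfun c a b D := Nat.le_mul_of_pos_left _ (by omega)
    have hκgD2 : κ ≤ gfun c a b D := by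
      have : κ ≤ κ * (c + d + 3) := Nat.le_mul_of_pos_right _ (by omega)
      omega
    have step2 : P * gfun c a b D ≤ (c * σ - Watt) * gfun c a b D :=
      Nat.mul_le_mul_right _ (by omega)
    have step3 : W * κ ≤ Watt * κ + ((c + d + 2) * (D - σ)) * κ := by
      calc W * κ ≤ (Watt + (c + d + 2) * (D - σ)) * κ := Nat.mul_le_mul_right _ hWsplit
        _ = Watt * κ + ((c + d + 2) * (D - σ)) * κ := by ring
    have step4 : (c * σ - Watt) * gfun c a b D + Watt * κ ≤ c * σ * gfun c a b D := by
      have e1 : Watt * κ ≤ Watt * gfun c a b D := Nat.mul_le_mul_left _ hκgD2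
      have e2 : (c * σ - Watt) * gfun c a b D + Watt * gfun c a b D =
          c * σ * gfun c a b D := by
        rw [← Nat.add_mul, Nat.sub_add_cancel hWattσ]
      omega
    have step5 : ((c + d + 2) * (D - σ)) * κ ≤ c * (D - σ) * gfun c a b D := by
      calc ((c + d + 2) * (D - σ)) * κ = (κ * (c + d + 2)) * (D - σ) := by ring
        _ ≤ (c * gfun c a b D) * (D - σ) := Nat.mul_le_mul_right _ hκgD1
        _ = c * (D - σ) * gfun c a b D := by ring
    have step6 : c * σ * gfun c a b D + c * (D - σ) * gfun c a b D =
        c * D * gfun c a b D := by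
      have e : σ + (D - σ) = D := by omega
      calc c * σ * gfun c a b D + c * (D - σ) * gfun c a b D
          = c * (σ + (D - σ)) * gfun c a b D := by ring
        _ = c * D * gfun c a b D := by rw [e]
    have step7 : c * D * gfun c a b D ≤ c * ((n - c) * gfun c a b (n - c)) := by
      have hDnc : D ≤ n - c := by omega
      have hg := gfun_mono c a b hDnc
      calc c * D * gfun c a b D = c * (D * gfun c a b D) := by ring
        _ ≤ c * ((n - c) * gfun c a b (n - c)) :=
            Nat.mul_le_mul_left _ (Nat.mul_le_mul hDnc hg)
    omega
  · -- few big vertices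
    push_neg at hcase
    have hPsD : P ≤ s * D := by
      have := Finset.sum_le_card_nsmul Bs (fun v => G.degree v) D hdegB
      rw [smul_eq_mul] at this
      rw [hP, hs]
      calc (∑ v ∈ Bs, G.degree v) ≤ Bs.card * D := this
        _ = s * D := by rw [hs]
    have hWD : W ≤ (c + d + 2) * n := by
      have hb2 : ∀ u ∈ Ls, (G.neighborFinset u ∩ Ls).card ≤ c + d + 2 := by
        intro u hu
        have hdegu : ¬ (c + d + 2 ≤ G.degree u) := (hmemL u).mp hu
        calc (G.neighborFinset u ∩ Ls).card ≤ (G.neighborFinset u).card :=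
              Finset.card_le_card (Finset.inter_subset_left)
          _ = G.degree u := rfl
          _ ≤ c + d + 2 := by omega
      have := Finset.sum_le_card_nsmul Ls _ _ hb2
      rw [smul_eq_mul, hLscard] at this
      calc W ≤ D * (c + d + 2) := this
        _ ≤ n * (c + d + 2) := Nat.mul_le_mul_right _ (by omega)
        _ = (c + d + 2) * n := by ring
    have m1 : P * gfun c a b D ≤ (c - 1) * (n * gfun c a b n) := by
      have e1 : P ≤ (c - 1) * n := by
        calc P ≤ s * D := hPsD
          _ ≤ (c - 1) * n := Nat.mul_le_mul (by omega) (by omega)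
      have e2 : gfun c a b D ≤ gfun c a b n := gfun_mono c a b (by omega)
      calc P * gfun c a b D ≤ ((c - 1) * n) * gfun c a b n := Nat.mul_le_mul e1 e2
        _ = (c - 1) * (n * gfun c a b n) := by ring
    have m2 : W * κ ≤ K * n := by
      calc W * κ ≤ ((c + d + 2) * n) * κ := Nat.mul_le_mul_right _ hWD
        _ = K * n := by rw [hK]; ring
    -- the two binomial inequalities
    have core_b := chooseL (K := K) hc2 (show 1 ≤ b by omega) n hnb
    have core_a := chooseL (K := 0) hc2 (show 1 ≤ a by omega) n hna
    have mb := Nat.mul_le_mul_left (Ca * (b + 1)) core_b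
    have ma := Nat.mul_le_mul_left (Cb * (a + 1)) core_a
    have idn : n * gfun c a b n =
        Ca * (n.choose (b + 1) * (b + 1)) + Cb * (n.choose (a + 1) * (a + 1)) := by
      unfold gfun
      rw [← hCa, ← hCb]
      calc n * (Ca * (n - 1).choose b + (n - 1).choose a * Cb)
          = Ca * (n * (n - 1).choose b) + Cb * (n * (n - 1).choose a) := by ring
        _ = _ := by rw [mul_choose_pred n b, mul_choose_pred n a]
    have idnc : (n - c) * gfun c a b (n - c) =
        Ca * ((n - c).choose (b + 1) * (b + 1)) + Cb * ((n - c).choose (a + 1) * (a + 1)) := by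
      unfold gfun
      rw [← hCa, ← hCb]
      calc (n - c) * (Ca * (n - c - 1).choose b + (n - c - 1).choose a * Cb)
          = Ca * ((n - c) * (n - c - 1).choose b) + Cb * ((n - c) * (n - c - 1).choose a) := by
            ring
        _ = _ := by rw [mul_choose_pred (n - c) b, mul_choose_pred (n - c) a]
    have eb1 : Ca * (b + 1) * ((c - 1) * n.choose (b + 1) + K * n) =
        (c - 1) * (Ca * (n.choose (b + 1) * (b + 1))) + Ca * (b + 1) * (K * n) := by ring
    have eb2 : Ca * (b + 1) * (c * (n - c).choose (b + 1)) =
        c * (Ca * ((n - c).choose (b + 1) * (b + 1))) := by ring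
    have ea1 : Cb * (a + 1) * ((c - 1) * n.choose (a + 1) + 0 * n) =
        (c - 1) * (Cb * (n.choose (a + 1) * (a + 1))) := by ring
    have ea2 : Cb * (a + 1) * (c * (n - c).choose (a + 1)) =
        c * (Cb * ((n - c).choose (a + 1) * (a + 1))) := by ring
    have eKn : K * n ≤ Ca * (b + 1) * (K * n) :=
      Nat.le_mul_of_pos_left _ (Nat.mul_pos (by omega) (by omega))
    have eL : (c - 1) * (n * gfun c a b n) =
        (c - 1) * (Ca * (n.choose (b + 1) * (b + 1))) +
          (c - 1) * (Cb * (n.choose (a + 1) * (a + 1))) := by rw [idn]; ring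
    have eR : c * ((n - c) * gfun c a b (n - c)) =
        c * (Ca * ((n - c).choose (b + 1) * (b + 1))) +
          c * (Cb * ((n - c).choose (a + 1) * (a + 1))) := by rw [idnc]; ring
    omega

end mainineq

theorem main_result (a b c d : ℕ)
    (ha : 0 < a) (hab : a ≤ b) (hac : a < c) (hcd : c ≤ d) :
    ∃ n₀ : ℕ, ∀ n ≥ n₀,
      exGen n (doubleStar a b) (doubleStar c d) =
        _root_.copyCount (doubleStar a b) (completeBipartiteGraph (Fin c) (Fin (n - c))) := by
  refine ⟨N0 a b c d + c + d + b + 3, fun n hn => ?_⟩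
  have hb : 0 < b := lt_of_lt_of_le ha hab
  have hc : 0 < c := lt_of_le_of_lt (Nat.zero_le a) hac
  have hcn : c ≤ n := by omega
  have hN0 : N0 a b c d ≤ n := by omega
  set μ := if a = b then 2 else 1 with hμ
  have hμpos : 0 < μ := by rw [hμ]; split <;> omega
  -- the bipartite graph is isomorphic to Wg n c
  have hiso : completeBipartiteGraph (Fin c) (Fin (n - c)) ≃g Wg n c := by
    refine ⟨finSumFinEquiv.trans (finCongr (by omega : c + (n - c) = n)), ?_⟩
    rintro (i | j) <;> rintro (i' | j') <;>
      simp [Wg_adj, completeBipartiteGraph_adj, finCongr, Fin.ext_iff] <;> omega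
  have hKW : _root_.copyCount (doubleStar a b) (completeBipartiteGraph (Fin c) (Fin (n - c))) =
      _root_.copyCount (doubleStar a b) (Wg n c) := by
    apply Nat.eq_of_mul_eq_mul_right hμpos
    rw [hμ, copyCount_mul ha hb, copyCount_mul ha hb]
    exact conf_card_iso hiso a b
  rw [hKW]
  -- now show exGen = copyCount of Wg
  have hfreeW : ¬ Contains (doubleStar c d) (Wg n c) := Wg_free hc le_rfl hcd hcn
  have hboundall : ∀ G : SimpleGraph (Fin n), ¬ Contains (doubleStar c d) G →
      _root_.copyCount (doubleStar a b) G ≤ _root_.copyCount (doubleStar a b) (Wg n c) := by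
    intro G hfree
    have h1 := copyCount_mul (G := G) ha hb
    have h2 := copyCount_mul (G := Wg n c) ha hb
    have h3 := conf_le_main ha hab hac hcd hN0 G hfree
    apply Nat.le_of_mul_le_mul_right _ hμpos
    rw [hμ] at *
    omega
  apply le_antisymm
  · apply csSup_le
    · exact ⟨_root_.copyCount (doubleStar a b) (Wg n c), ⟨Wg n c, hfreeW, rfl⟩⟩
    · rintro N ⟨G, hfree, rfl⟩
      exact hboundall G hfree
  · apply le_csSup
    · refine ⟨(Finset.univ :
        Finset (Fin n × Fin n × Finset (Fin n) × Finset (Fin n))).card, ?_⟩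
      rintro N ⟨G, -, rfl⟩
      calc _root_.copyCount (doubleStar a b) G ≤ _root_.copyCount (doubleStar a b) G * μ :=
            Nat.le_mul_of_pos_right _ hμpos
        _ = (conf G a b).card := by rw [hμ]; exact copyCount_mul ha hb G
        _ ≤ _ := Finset.card_le_card (Finset.subset_univ _)
    · exact ⟨Wg n c, hfreeW, rfl⟩

end DS

/-- for `a ≤ b`, `a < c ≤ d` and large `n`,
`ex(n, S_{a,b}, S_{c,d}) = N(S_{a,b}, K_{c,n-c})`. -/
theorem exGen_doubleStar_doubleStar_eq_completeBipartite (a b c d : ℕ)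
    (ha : 0 < a) (hab : a ≤ b) (hac : a < c) (hcd : c ≤ d) :
    ∃ n₀ : ℕ, ∀ n ≥ n₀,
      exGen n (doubleStar a b) (doubleStar c d) =
        _root_.copyCount (doubleStar a b) (completeBipartiteGraph (Fin c) (Fin (n - c))) := by
  exact DS.main_result a b c d ha hab hac hcd
end

section
/- Let t be a positive integer and 0 < β < 1. There exists n₀ such that for every n ≥ n₀ the following holds: if G is a B_t-free graph on n vertices whose maximum degree Δ satisfies n/2 < Δ < βn, then G has at most Δ(n−Δ) edges. -/
open SimpleGraph

/-- The book `B_t`: `t` triangles sharing a common edge; the common edge is `0-1` and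
vertices `2,…,t+1` are the pages. -/
def book (t : ℕ) : SimpleGraph (Fin (t + 2)) :=
  SimpleGraph.fromRel (fun x y => x.val < 2 ∧ x ≠ y)

lemma book_adj' {t : ℕ} (a b : Fin (t + 2)) :
    (book t).Adj a b ↔ a ≠ b ∧ ((a : ℕ) < 2 ∨ (b : ℕ) < 2) := by
  constructor
  · rintro ⟨hne, h | h⟩
    · exact ⟨hne, Or.inl h.1⟩
    · exact ⟨hne, Or.inr h.1⟩
  · rintro ⟨hne, h | h⟩
    · exact ⟨hne, Or.inl ⟨h, hne⟩⟩
    · exact ⟨hne, Or.inr ⟨h, hne.symm⟩⟩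

/-- In a `B_t`-free graph, adjacent vertices have at most `t-1` common neighbors. -/
lemma common_nbr_bound {n t : ℕ} (ht : 0 < t) (G : SimpleGraph (Fin n))
    [DecidableRel G.Adj] (hG : ¬ Contains (book t) G)
    {x y : Fin n} (hxy : G.Adj x y) :
    (G.neighborFinset x ∩ G.neighborFinset y).card ≤ t - 1 := by
  by_contra hc
  push_neg at hc
  have hT : t ≤ (G.neighborFinset x ∩ G.neighborFinset y).card := by omega
  obtain ⟨s, hs, hcard⟩ := Finset.exists_subset_card_eq hT
  have hsx : ∀ w ∈ s, G.Adj x w ∧ G.Adj y w := by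
    intro w hw
    have h := hs hw
    rw [Finset.mem_inter, SimpleGraph.mem_neighborFinset, SimpleGraph.mem_neighborFinset] at h
    exact h
  set e : Fin t ≃o s := s.orderIsoOfFin hcard with he
  set f : Fin (t + 2) → Fin n := fun i =>
    if h : (i : ℕ) < 2 then (if (i : ℕ) = 0 then x else y)
    else ((e ⟨(i : ℕ) - 2, by omega⟩ : s) : Fin n) with hf
  have hf0 : ∀ i : Fin (t + 2), (i : ℕ) = 0 → f i = x := by
    intro i hi
    rw [hf]; dsimp only; rw [dif_pos (by omega), if_pos hi]
  have hf1 : ∀ i : Fin (t + 2), (i : ℕ) = 1 → f i = y := by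
    intro i hi
    rw [hf]; dsimp only; rw [dif_pos (by omega), if_neg (by omega)]
  have hf2 : ∀ (i : Fin (t + 2)) (hi : 2 ≤ (i : ℕ)),
      f i = ((e ⟨(i : ℕ) - 2, by omega⟩ : s) : Fin n) := by
    intro i hi
    rw [hf]; dsimp only; rw [dif_neg (by omega)]
  have hmem : ∀ (i : Fin (t + 2)), 2 ≤ (i : ℕ) → f i ∈ s := by
    intro i hi
    rw [hf2 i hi]
    exact (e _).2
  have hmadj : ∀ (i : Fin (t + 2)), 2 ≤ (i : ℕ) → G.Adj x (f i) ∧ G.Adj y (f i) :=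
    fun i hi => hsx _ (hmem i hi)
  have hmap : ∀ a b : Fin (t + 2), (book t).Adj a b → G.Adj (f a) (f b) := by
    intro a b hab
    rw [book_adj'] at hab
    obtain ⟨hne, h2⟩ := hab
    have hne' : (a : ℕ) ≠ (b : ℕ) := fun h => hne (Fin.ext h)
    by_cases ha : (a : ℕ) < 2 <;> by_cases hb : (b : ℕ) < 2
    · rcases (by omega : ((a : ℕ) = 0 ∧ (b : ℕ) = 1) ∨ ((a : ℕ) = 1 ∧ (b : ℕ) = 0)) with
        ⟨h1, h2'⟩ | ⟨h1, h2'⟩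
      · rw [hf0 a h1, hf1 b h2']; exact hxy
      · rw [hf1 a h1, hf0 b h2']; exact hxy.symm
    · rcases (by omega : (a : ℕ) = 0 ∨ (a : ℕ) = 1) with h1 | h1
      · rw [hf0 a h1]; exact (hmadj b (by omega)).1
      · rw [hf1 a h1]; exact (hmadj b (by omega)).2
    · rcases (by omega : (b : ℕ) = 0 ∨ (b : ℕ) = 1) with h1 | h1
      · rw [hf0 b h1]; exact ((hmadj a (by omega)).1).symm
      · rw [hf1 b h1]; exact ((hmadj a (by omega)).2).symm
    · omega
  have hinj : Function.Injective f := by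
    intro a b hfab
    by_cases ha : (a : ℕ) < 2 <;> by_cases hb : (b : ℕ) < 2
    · by_cases ha0 : (a : ℕ) = 0 <;> by_cases hb0 : (b : ℕ) = 0
      · exact Fin.ext (by omega)
      · rw [hf0 a ha0, hf1 b (by omega)] at hfab
        exact absurd hfab hxy.ne
      · rw [hf1 a (by omega), hf0 b hb0] at hfab
        exact absurd hfab.symm hxy.ne
      · exact Fin.ext (by omega)
    · exfalso
      have hb2 : 2 ≤ (b : ℕ) := by omega
      rcases (by omega : (a : ℕ) = 0 ∨ (a : ℕ) = 1) with h1 | h1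
      · rw [hf0 a h1] at hfab
        exact (hmadj b hb2).1.ne (hfab)
      · rw [hf1 a h1] at hfab
        exact (hmadj b hb2).2.ne (hfab)
    · exfalso
      have ha2 : 2 ≤ (a : ℕ) := by omega
      rcases (by omega : (b : ℕ) = 0 ∨ (b : ℕ) = 1) with h1 | h1
      · rw [hf0 b h1] at hfab
        exact (hmadj a ha2).1.ne hfab.symm
      · rw [hf1 b h1] at hfab
        exact (hmadj a ha2).2.ne hfab.symm
    · have ha2 : 2 ≤ (a : ℕ) := by omega
      have hb2 : 2 ≤ (b : ℕ) := by omega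
      rw [hf2 a ha2, hf2 b hb2] at hfab
      have h3 := e.injective (Subtype.coe_injective hfab)
      have h4 : (a : ℕ) - 2 = (b : ℕ) - 2 := congrArg Fin.val h3
      exact Fin.ext (by omega)
  exact hG ⟨⟨f, fun hab => hmap _ _ hab⟩, hinj⟩

/-- Key counting lemma. -/
lemma count_lemma {n : ℕ} (G : SimpleGraph (Fin n)) [DecidableRel G.Adj] (t : ℕ)
    (hcom : ∀ x y : Fin n, G.Adj x y →
      (G.neighborFinset x ∩ G.neighborFinset y).card ≤ t - 1)
    (v : Fin n) (hb : 5 * t ≤ ((G.neighborFinset v)ᶜ).card) :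
    ∀ (k : ℕ) (S : Finset (Fin n)), S.card ≤ k → (∀ a ∈ S, G.Adj v a) →
      ∑ a ∈ S, ((G.neighborFinset a ∩ S).card +
        (G.neighborFinset a ∩ (G.neighborFinset v)ᶜ).card)
        ≤ S.card * ((G.neighborFinset v)ᶜ).card := by
  set B : Finset (Fin n) := (G.neighborFinset v)ᶜ with hB
  set b : ℕ := B.card with hbdef
  have hswap : ∀ P Q : Finset (Fin n),
      ∑ a ∈ P, (G.neighborFinset a ∩ Q).card = ∑ x ∈ Q, (G.neighborFinset x ∩ P).card := by
    intro P Q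
    have h1 : ∀ (a : Fin n) (W : Finset (Fin n)),
        (G.neighborFinset a ∩ W).card = ∑ x ∈ W, if G.Adj a x then 1 else 0 := by
      intro a W
      rw [← Finset.card_filter]
      congr 1
      ext z
      simp only [Finset.mem_inter, SimpleGraph.mem_neighborFinset, Finset.mem_filter]
      tauto
    simp_rw [h1]
    rw [Finset.sum_comm]
    refine Finset.sum_congr rfl fun z _ => Finset.sum_congr rfl fun a _ => ?_
    simp only [G.adj_comm]
  intro k
  induction k with
  | zero =>
    intro S hS _
    have h0 : S = ∅ := Finset.card_eq_zero.mp (Nat.le_zero.mp hS)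
    simp [h0]
  | succ k ih =>
    intro S hS hSv
    by_cases hedge : ∃ a₁ ∈ S, ∃ a₂ ∈ S, G.Adj a₁ a₂
    · obtain ⟨a₁, ha₁, a₂, ha₂, hadj⟩ := hedge
      have hne : a₁ ≠ a₂ := hadj.ne
      set S' : Finset (Fin n) := (S.erase a₁).erase a₂ with hS'def
      have ha₂' : a₂ ∈ S.erase a₁ := Finset.mem_erase.mpr ⟨hne.symm, ha₂⟩
      have hsub' : S' ⊆ S := (Finset.erase_subset _ _).trans (Finset.erase_subset _ _)
      have hcardS' : S'.card = S.card - 1 - 1 := by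
        rw [hS'def, Finset.card_erase_of_mem ha₂', Finset.card_erase_of_mem ha₁]
      have hcard2 : 2 ≤ S.card := by
        have h1 : ({a₁, a₂} : Finset (Fin n)) ⊆ S := by
          intro z hz
          rcases Finset.mem_insert.mp hz with h | h
          · exact h ▸ ha₁
          · exact (Finset.mem_singleton.mp h) ▸ ha₂
        have h2 : ({a₁, a₂} : Finset (Fin n)).card = 2 := by
          rw [Finset.card_insert_of_notMem (by simp [hne]), Finset.card_singleton]
        exact h2 ▸ Finset.card_le_card h1
      have hsplit : ∀ g : Fin n → ℕ, ∑ z ∈ S, g z = ∑ z ∈ S', g z + g a₂ + g a₁ := by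
        intro g
        rw [← Finset.sum_erase_add S g ha₁, ← Finset.sum_erase_add (S.erase a₁) g ha₂']
      have hsmall : ∀ a ∈ S, ∀ W ⊆ S, (G.neighborFinset a ∩ W).card ≤ t - 1 := by
        intro a ha W hW
        have h1 : G.neighborFinset a ∩ W ⊆ G.neighborFinset a ∩ G.neighborFinset v := by
          intro z hz
          rcases Finset.mem_inter.mp hz with ⟨h1, h2⟩
          exact Finset.mem_inter.mpr
            ⟨h1, (SimpleGraph.mem_neighborFinset _ _ _).mpr (hSv z (hW h2))⟩
        exact (Finset.card_le_card h1).trans (hcom a v ((hSv a ha).symm))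
      -- sum of inner parts
      have hT : ∑ a ∈ S, (G.neighborFinset a ∩ S).card ≤
          ∑ a ∈ S', (G.neighborFinset a ∩ S').card + 4 * (t - 1) := by
        rw [hsplit (fun a => (G.neighborFinset a ∩ S).card)]
        have e1 : ∑ a ∈ S', (G.neighborFinset a ∩ S).card
            = ∑ z ∈ S, (G.neighborFinset z ∩ S').card := hswap S' S
        rw [e1, hsplit (fun z => (G.neighborFinset z ∩ S').card)]
        have b1 := hsmall a₁ ha₁ S (le_refl _)
        have b2 := hsmall a₂ ha₂ S (le_refl _)
        have b3 := hsmall a₁ ha₁ S' hsub'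
        have b4 := hsmall a₂ ha₂ S' hsub'
        omega
      -- sum of B parts
      have hU : ∑ a ∈ S, (G.neighborFinset a ∩ B).card ≤
          ∑ a ∈ S', (G.neighborFinset a ∩ B).card + (b + (t - 1)) := by
        rw [hsplit (fun a => (G.neighborFinset a ∩ B).card)]
        have h1 : (G.neighborFinset a₁ ∩ B).card + (G.neighborFinset a₂ ∩ B).card
            ≤ b + (t - 1) := by
          rw [← Finset.card_union_add_card_inter]
          have h2 : (G.neighborFinset a₁ ∩ B) ∪ (G.neighborFinset a₂ ∩ B) ⊆ B := by
            intro z hz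
            rcases Finset.mem_union.mp hz with h | h
            · exact (Finset.mem_inter.mp h).2
            · exact (Finset.mem_inter.mp h).2
          have h3 : (G.neighborFinset a₁ ∩ B) ∩ (G.neighborFinset a₂ ∩ B) ⊆
              G.neighborFinset a₁ ∩ G.neighborFinset a₂ := by
            intro z hz
            simp only [Finset.mem_inter] at hz ⊢
            tauto
          have h4 := Finset.card_le_card h2
          have h5 := (Finset.card_le_card h3).trans (hcom a₁ a₂ hadj)
          omega
        omega
      have hIH : ∑ a ∈ S', ((G.neighborFinset a ∩ S').card +
          (G.neighborFinset a ∩ B).card) ≤ S'.card * b := by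
        refine ih S' (by omega) (fun a ha => hSv a (hsub' ha))
      rw [Finset.sum_add_distrib]
      have hsum' : ∑ a ∈ S', (G.neighborFinset a ∩ S').card +
          ∑ a ∈ S', (G.neighborFinset a ∩ B).card ≤ S'.card * b := by
        rw [← Finset.sum_add_distrib]; exact hIH
      have hfin : S.card * b = S'.card * b + 2 * b := by
        have h6 : S'.card + 2 = S.card := by omega
        rw [← h6, Nat.add_mul]
      have hbt : 4 * (t - 1) + (b + (t - 1)) ≤ 2 * b := by omega
      omega
    · push_neg at hedge
      have hEach : ∀ a ∈ S, (G.neighborFinset a ∩ S).card +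
          (G.neighborFinset a ∩ B).card ≤ b := by
        intro a ha
        have h0 : G.neighborFinset a ∩ S = ∅ := by
          rw [Finset.eq_empty_iff_forall_notMem]
          intro z hz
          rcases Finset.mem_inter.mp hz with ⟨h1, h2⟩
          exact hedge a ha z h2 ((SimpleGraph.mem_neighborFinset _ _ _).mp h1)
        rw [h0]
        simpa using Finset.card_le_card
          (Finset.inter_subset_right : G.neighborFinset a ∩ B ⊆ B)
      calc ∑ a ∈ S, ((G.neighborFinset a ∩ S).card + (G.neighborFinset a ∩ B).card)
          ≤ S.card • b := Finset.sum_le_card_nsmul S _ b hEach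
        _ = S.card * b := by rw [smul_eq_mul]

/-- for large `n`, a `B_t`-free graph on `n` vertices with maximum degree
`Δ` satisfying `n/2 < Δ < βn` has at most `Δ(n - Δ)` edges. -/
theorem book_free_edge_bound (t : ℕ) (ht : 0 < t) (β : ℝ) (hβ0 : 0 < β) (hβ1 : β < 1) :
    ∃ n₀ : ℕ, ∀ n ≥ n₀, ∀ G : SimpleGraph (Fin n), ∀ Δ : ℕ,
      ¬ Contains (book t) G →
      (∀ v, (G.neighborSet v).ncard ≤ Δ) →
      (∃ v, (G.neighborSet v).ncard = Δ) →
      (n : ℝ) / 2 < (Δ : ℝ) → (Δ : ℝ) < β * n →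
      G.edgeSet.ncard ≤ Δ * (n - Δ) := by
  refine ⟨⌈(5 * (t : ℝ) + 1) / (1 - β)⌉₊, fun n hn G Δ hfree hmax hex hlo hhi => ?_⟩
  classical
  letI : DecidableRel G.Adj := Classical.decRel _
  obtain ⟨v, hv⟩ := hex
  have hdeg : ∀ w, (G.neighborSet w).ncard = G.degree w := by
    intro w
    rw [Set.ncard_eq_toFinset_card']
    rfl
  have hdegv : G.degree v = Δ := by rw [← hdeg]; exact hv
  have hmax' : ∀ w, G.degree w ≤ Δ := fun w => (hdeg w) ▸ hmax w
  -- basic numerics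
  have hn0 : 0 < n := by
    by_contra h
    push_neg at h
    interval_cases n
    simp at hlo hhi
    nlinarith
  have hΔn : Δ < n := by
    have h1 : (Δ : ℝ) < n := by
      have := hhi
      nlinarith [(by exact_mod_cast hn0 : (0:ℝ) < (n:ℝ))]
    exact_mod_cast h1
  have h1β : (0 : ℝ) < 1 - β := by linarith
  have hceil : (5 * (t : ℝ) + 1) / (1 - β) ≤ (n : ℝ) := by
    calc (5 * (t : ℝ) + 1) / (1 - β) ≤ (⌈(5 * (t : ℝ) + 1) / (1 - β)⌉₊ : ℝ) := Nat.le_ceil _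
      _ ≤ (n : ℝ) := Nat.cast_le.mpr hn
  have hbR : 5 * (t : ℝ) < ((n - Δ : ℕ) : ℝ) := by
    rw [Nat.cast_sub hΔn.le]
    have h2 : 5 * (t : ℝ) + 1 ≤ (1 - β) * n := by
      rw [div_le_iff₀ h1β] at hceil
      linarith
    nlinarith
  have hb5 : 5 * t ≤ n - Δ := by
    have : (5 * t : ℕ) < (n - Δ : ℕ) := by exact_mod_cast hbR
    omega
  -- set up A and B
  set A : Finset (Fin n) := G.neighborFinset v with hA
  have hAcard : A.card = Δ := hdegv
  have hBcard : Aᶜ.card = n - Δ := by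
    rw [Finset.card_compl, hAcard, Fintype.card_fin]
  have hcom := fun x y hxy => common_nbr_bound ht G hfree (x := x) (y := y) hxy
  have hkey := count_lemma G t hcom v (by rw [← hA, hBcard]; exact hb5) A.card A (le_refl _)
    (fun a ha => (SimpleGraph.mem_neighborFinset _ _ _).mp ha)
  rw [← hA] at hkey
  -- sum over A
  have hdegsplit : ∀ a : Fin n, G.degree a =
      (G.neighborFinset a ∩ A).card + (G.neighborFinset a ∩ Aᶜ).card := by
    intro a
    rw [← SimpleGraph.card_neighborFinset_eq_degree,
      ← Finset.card_inter_add_card_sdiff (G.neighborFinset a) A]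
    congr 2
    ext z
    simp [Finset.mem_sdiff]
  have hsumA : ∑ a ∈ A, G.degree a ≤ Δ * (n - Δ) := by
    calc ∑ a ∈ A, G.degree a
        = ∑ a ∈ A, ((G.neighborFinset a ∩ A).card + (G.neighborFinset a ∩ Aᶜ).card) :=
          Finset.sum_congr rfl fun a _ => hdegsplit a
      _ ≤ A.card * Aᶜ.card := hkey
      _ = Δ * (n - Δ) := by rw [hAcard, hBcard]
  have hsumB : ∑ a ∈ Aᶜ, G.degree a ≤ (n - Δ) * Δ := by
    calc ∑ a ∈ Aᶜ, G.degree a ≤ Aᶜ.card • Δ :=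
          Finset.sum_le_card_nsmul _ _ _ (fun w _ => hmax' w)
      _ = (n - Δ) * Δ := by rw [hBcard, smul_eq_mul]
  have htotal : ∑ w, G.degree w ≤ 2 * (Δ * (n - Δ)) := by
    rw [← Finset.sum_add_sum_compl A (fun w => G.degree w)]
    have h9 : (n - Δ) * Δ = Δ * (n - Δ) := Nat.mul_comm _ _
    rw [h9] at hsumB
    linarith [hsumA, hsumB]
  have hhand : ∑ w, G.degree w = 2 * G.edgeFinset.card :=
    SimpleGraph.sum_degrees_eq_twice_card_edges G
  have hE : G.edgeSet.ncard = G.edgeFinset.card := by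
    rw [← SimpleGraph.coe_edgeFinset, Set.ncard_coe_finset]
  rw [hE]
  have h2 : 2 * G.edgeFinset.card ≤ 2 * (Δ * (n - Δ)) := hhand ▸ htotal
  exact Nat.le_of_mul_le_mul_left h2 (by norm_num)
end

section
/- For every ε > 0 there exist δ > 0 and n₀ such that the following holds for all n ≥ n₀: if G is an F₂-free graph on n vertices with maximum degree Δ > n/2 and with at least Δ(n−Δ) − δn² edges, then G can be made bipartite by deleting at most εn² edges. -/
open SimpleGraph

/-- The 2-fan `F₂`: two triangles `{0,1,2}` and `{0,3,4}` sharing the vertex `0`. -/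
def twoFan : SimpleGraph (Fin 5) :=
  SimpleGraph.fromRel (fun x y =>
    x.val = 0 ∨ (x.val = 1 ∧ y.val = 2) ∨ (x.val = 3 ∧ y.val = 4))

lemma contains_twoFan_aux {n : ℕ} {G : SimpleGraph (Fin n)} {v a b c d : Fin n}
    (hab : G.Adj a b) (hcd : G.Adj c d)
    (hva : G.Adj v a) (hvb : G.Adj v b) (hvc : G.Adj v c) (hvd : G.Adj v d)
    (hac : a ≠ c) (had : a ≠ d) (hbc : b ≠ c) (hbd : b ≠ d) :
    Contains twoFan G := by
  set f : Fin 5 → Fin n := ![v, a, b, c, d] with hf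
  have hinj : Function.Injective f := by
    have h1 := hva.ne; have h2 := hvb.ne; have h3 := hvc.ne; have h4 := hvd.ne
    have h5 := hab.ne; have h6 := hcd.ne
    intro x y hxy
    fin_cases x <;> fin_cases y <;>
      simp_all [f, Matrix.cons_val_zero, Matrix.cons_val_one, Matrix.head_cons] <;>
      first | rfl | tauto
  have hmap : ∀ {x y : Fin 5}, twoFan.Adj x y → G.Adj (f x) (f y) := by
    intro x y hxy
    fin_cases x <;> fin_cases y <;>
      simp_all [f, twoFan, SimpleGraph.fromRel_adj] <;>
      first
        | exact hab | exact hab.symm | exact hcd | exact hcd.symm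
        | exact hva | exact hva.symm | exact hvb | exact hvb.symm
        | exact hvc | exact hvc.symm | exact hvd | exact hvd.symm
        | (exfalso; revert hxy; decide)
  exact ⟨⟨f, hmap⟩, hinj⟩


/-- stability. An `F₂`-free graph with maximum degree `Δ > n/2` and at
least `Δ(n-Δ) - δn²` edges can be made bipartite by deleting at most `εn²` edges. -/
theorem twoFan_free_stability (ε : ℝ) (hε : 0 < ε) :
    ∃ δ : ℝ, 0 < δ ∧ ∃ n₀ : ℕ, ∀ n ≥ n₀, ∀ G : SimpleGraph (Fin n), ∀ Δ : ℕ,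
      ¬ Contains twoFan G →
      (∀ v, (G.neighborSet v).ncard ≤ Δ) →
      (∃ v, (G.neighborSet v).ncard = Δ) →
      (n : ℝ) / 2 < (Δ : ℝ) →
      (Δ : ℝ) * ((n : ℝ) - (Δ : ℝ)) - δ * (n : ℝ) ^ 2 ≤ (G.edgeSet.ncard : ℝ) →
      ∃ S : Set (Sym2 (Fin n)), S ⊆ G.edgeSet ∧ (S.ncard : ℝ) ≤ ε * (n : ℝ) ^ 2 ∧
        (G.deleteEdges S).Colorable 2 := by
  classical
  refine ⟨ε / 2, by positivity, max 1 ⌈(8 : ℝ) / ε⌉₊, ?_⟩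
  intro n hn G Δ hfree hdegle hex hhalf hedges
  obtain ⟨v, hv⟩ := hex
  set A : Set (Fin n) := G.neighborSet v with hA
  let GA : SimpleGraph (Fin n) :=
    { Adj := fun u w => G.Adj u w ∧ u ∈ A ∧ w ∈ A
      symm := ⟨fun u w h => ⟨h.1.symm, h.2.2, h.2.1⟩⟩
      loopless := ⟨fun u h => G.loopless.irrefl u h.1⟩ }
  let GB : SimpleGraph (Fin n) :=
    { Adj := fun u w => G.Adj u w ∧ u ∉ A ∧ w ∉ A
      symm := ⟨fun u w h => ⟨h.1.symm, h.2.2, h.2.1⟩⟩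
      loopless := ⟨fun u h => G.loopless.irrefl u h.1⟩ }
  let GX : SimpleGraph (Fin n) :=
    { Adj := fun u w => G.Adj u w ∧ ((u ∈ A ∧ w ∉ A) ∨ (u ∉ A ∧ w ∈ A))
      symm := by
        constructor
        intro u w h
        refine ⟨h.1.symm, ?_⟩
        tauto
      loopless := by
        constructor
        intro u h
        tauto }
  have hGA_le : GA ≤ G := by intro u w h; exact h.1
  have hGB_le : GB ≤ G := by intro u w h; exact h.1
  refine ⟨(GA ⊔ GB).edgeSet, ?_, ?_, ?_⟩
  · exact SimpleGraph.edgeSet_mono (sup_le hGA_le hGB_le)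
  · -- cardinality bound
    have hv_deg : ∀ u, G.degree u ≤ Δ := by
      intro u
      have h1 := hdegle u
      have h2 : (G.neighborSet u).ncard = G.degree u := by
        rw [← Nat.card_coe_set_eq, Nat.card_eq_fintype_card]
        exact G.card_neighborSet_eq_degree u
      rwa [h2] at h1
    -- eA ≤ 2n
    have hEA : GA.edgeSet.ncard ≤ 2 * n := by
      rw [← coe_edgeFinset, Set.ncard_coe_finset]
      rcases Finset.eq_empty_or_nonempty GA.edgeFinset with h0 | ⟨e₀, he₀⟩
      · simp [h0]
      · induction e₀ using Sym2.ind with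
        | _ x y =>
        rw [mem_edgeFinset, mem_edgeSet] at he₀
        obtain ⟨hxyG, hxA, hyA⟩ := he₀
        have hkey : ∀ e ∈ GA.edgeFinset, x ∈ e ∨ y ∈ e := by
          intro e he
          induction e using Sym2.ind with
          | _ a b =>
          rw [mem_edgeFinset, mem_edgeSet] at he
          obtain ⟨habG, haA, hbA⟩ := he
          by_contra hcon
          push_neg at hcon
          simp only [Sym2.mem_iff, not_or] at hcon
          obtain ⟨⟨hxa, hxb⟩, hya, hyb⟩ := hcon
          exact hfree (contains_twoFan_aux hxyG habG hxA hyA haA hbA hxa hxb hya hyb)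
        have hsub : GA.edgeFinset ⊆ GA.incidenceFinset x ∪ GA.incidenceFinset y := by
          intro e he
          rcases hkey e he with h | h
          · exact Finset.mem_union_left _ (by
              rw [mem_incidenceFinset]
              exact ⟨(mem_edgeFinset.mp he), h⟩)
          · exact Finset.mem_union_right _ (by
              rw [mem_incidenceFinset]
              exact ⟨(mem_edgeFinset.mp he), h⟩)
        calc GA.edgeFinset.card ≤ (GA.incidenceFinset x ∪ GA.incidenceFinset y).card :=
              Finset.card_le_card hsub
          _ ≤ (GA.incidenceFinset x).card + (GA.incidenceFinset y).card :=
              Finset.card_union_le _ _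
          _ = GA.degree x + GA.degree y := by
              rw [card_incidenceFinset_eq_degree, card_incidenceFinset_eq_degree]
          _ ≤ n + n := by
              have d1 : GA.degree x ≤ n := by
                simpa using Finset.card_le_univ (GA.neighborFinset x)
              have d2 : GA.degree y ≤ n := by
                simpa using Finset.card_le_univ (GA.neighborFinset y)
              omega
          _ = 2 * n := by ring
    -- B as a finset
    set Bf : Finset (Fin n) := A.toFinsetᶜ with hBf
    have hΔn : Δ ≤ n := by
      rw [← hv]
      calc (G.neighborSet v).ncard ≤ (Set.univ : Set (Fin n)).ncard :=
            Set.ncard_le_ncard (Set.subset_univ _) Set.finite_univ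
        _ = n := by rw [Set.ncard_univ]; simp
    have hBcard : Bf.card = n - Δ := by
      rw [hBf, Finset.card_compl, ← Set.ncard_eq_toFinset_card', hv, Fintype.card_fin]
    have hsumB : ∑ b ∈ Bf, G.degree b ≤ (n - Δ) * Δ := by
      calc ∑ b ∈ Bf, G.degree b ≤ ∑ _b ∈ Bf, Δ := Finset.sum_le_sum fun b _ => hv_deg b
        _ = (n - Δ) * Δ := by rw [Finset.sum_const, smul_eq_mul, hBcard]
    have hGBsum : ∑ b ∈ Bf, GB.degree b = 2 * GB.edgeSet.ncard := by
      rw [← coe_edgeFinset, Set.ncard_coe_finset, ← sum_degrees_eq_twice_card_edges]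
      apply Finset.sum_subset (Finset.subset_univ _)
      intro x _ hx
      rw [hBf, Finset.mem_compl, not_not, Set.mem_toFinset] at hx
      rw [← card_neighborFinset_eq_degree]
      convert Finset.card_empty
      ext w
      simp only [mem_neighborFinset, Finset.notMem_empty, iff_false]
      exact fun h => h.2.1 hx
    have hGXsum : GX.edgeSet.ncard ≤ ∑ b ∈ Bf, GX.degree b := by
      rw [← coe_edgeFinset, Set.ncard_coe_finset]
      have hsub : GX.edgeFinset ⊆ Bf.biUnion (fun b => GX.incidenceFinset b) := by
        intro e he
        induction e using Sym2.ind with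
        | _ u w =>
        have he' : GX.Adj u w := by rwa [mem_edgeFinset, mem_edgeSet] at he
        rcases he'.2 with ⟨huA, hwA⟩ | ⟨huA, hwA⟩
        · refine Finset.mem_biUnion.mpr ⟨w, ?_, ?_⟩
          · rw [hBf, Finset.mem_compl, Set.mem_toFinset]; exact hwA
          · rw [mem_incidenceFinset]
            exact ⟨(GX.mem_edgeSet).mpr he', Sym2.mem_mk_right _ _⟩
        · refine Finset.mem_biUnion.mpr ⟨u, ?_, ?_⟩
          · rw [hBf, Finset.mem_compl, Set.mem_toFinset]; exact huA
          · rw [mem_incidenceFinset]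
            exact ⟨(GX.mem_edgeSet).mpr he', Sym2.mem_mk_left _ _⟩
      calc GX.edgeFinset.card ≤ (Bf.biUnion (fun b => GX.incidenceFinset b)).card :=
            Finset.card_le_card hsub
        _ ≤ ∑ b ∈ Bf, (GX.incidenceFinset b).card := Finset.card_biUnion_le
        _ = ∑ b ∈ Bf, GX.degree b := by
            apply Finset.sum_congr rfl
            intro b _
            exact card_incidenceFinset_eq_degree _ _
    have hptwise : ∀ b ∈ Bf, GB.degree b + GX.degree b ≤ G.degree b := by
      intro b hb
      rw [hBf, Finset.mem_compl, Set.mem_toFinset] at hb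
      rw [← card_neighborFinset_eq_degree, ← card_neighborFinset_eq_degree,
        ← card_neighborFinset_eq_degree, ← Finset.card_union_of_disjoint]
      · apply Finset.card_le_card
        intro w hw
        rw [Finset.mem_union, mem_neighborFinset, mem_neighborFinset] at hw
        rw [mem_neighborFinset]
        exact hw.elim (fun h => h.1) (fun h => h.1)
      · rw [Finset.disjoint_left]
        intro w hw1 hw2
        rw [mem_neighborFinset] at hw1 hw2
        rcases hw2.2 with ⟨h1, _⟩ | ⟨_, h2⟩
        · exact hb h1
        · exact hw1.2.2 h2
    have hmain : 2 * GB.edgeSet.ncard + GX.edgeSet.ncard ≤ (n - Δ) * Δ := by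
      calc 2 * GB.edgeSet.ncard + GX.edgeSet.ncard
          ≤ ∑ b ∈ Bf, GB.degree b + ∑ b ∈ Bf, GX.degree b := by
            rw [hGBsum]; exact Nat.add_le_add le_rfl hGXsum
        _ = ∑ b ∈ Bf, (GB.degree b + GX.degree b) := (Finset.sum_add_distrib).symm
        _ ≤ ∑ b ∈ Bf, G.degree b := Finset.sum_le_sum hptwise
        _ ≤ (n - Δ) * Δ := hsumB
    -- disjointness
    have hdAB : Disjoint GA.edgeSet GB.edgeSet := by
      rw [Set.disjoint_left]
      intro e he1 he2
      induction e using Sym2.ind with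
      | _ a b =>
      rw [mem_edgeSet] at he1 he2
      exact he2.2.1 he1.2.1
    have hdABX : Disjoint (GA.edgeSet ∪ GB.edgeSet) GX.edgeSet := by
      rw [Set.disjoint_left]
      intro e he1 he2
      induction e using Sym2.ind with
      | _ a b =>
      rw [Set.mem_union, mem_edgeSet, mem_edgeSet] at he1
      rw [mem_edgeSet] at he2
      rcases he2.2 with ⟨h1, h2⟩ | ⟨h1, h2⟩ <;>
        rcases he1 with ⟨_, q1, q2⟩ | ⟨_, q1, q2⟩ <;> tauto
    have hGsup : G = (GA ⊔ GB) ⊔ GX := by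
      ext u w
      simp only [sup_adj]
      constructor
      · intro h
        by_cases hu : u ∈ A <;> by_cases hw : w ∈ A
        · exact Or.inl (Or.inl ⟨h, hu, hw⟩)
        · exact Or.inr ⟨h, Or.inl ⟨hu, hw⟩⟩
        · exact Or.inr ⟨h, Or.inr ⟨hu, hw⟩⟩
        · exact Or.inl (Or.inr ⟨h, hu, hw⟩)
      · rintro ((h | h) | h) <;> exact h.1
    have hSncard : (GA ⊔ GB).edgeSet.ncard = GA.edgeSet.ncard + GB.edgeSet.ncard := by
      rw [edgeSet_sup, Set.ncard_union_eq hdAB (Set.toFinite _) (Set.toFinite _)]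
    have hGncard : G.edgeSet.ncard
        = GA.edgeSet.ncard + GB.edgeSet.ncard + GX.edgeSet.ncard := by
      conv_lhs => rw [hGsup]
      rw [edgeSet_sup, edgeSet_sup,
        Set.ncard_union_eq hdABX (Set.toFinite _) (Set.toFinite _),
        Set.ncard_union_eq hdAB (Set.toFinite _) (Set.toFinite _)]
    rw [hSncard]
    -- real arithmetic
    set eA : ℝ := (GA.edgeSet.ncard : ℝ) with heA
    set eB : ℝ := (GB.edgeSet.ncard : ℝ) with heB
    set eX : ℝ := (GX.edgeSet.ncard : ℝ) with heX
    have hmainR : 2 * eB + eX ≤ (Δ : ℝ) * ((n : ℝ) - (Δ : ℝ)) := by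
      have hcast : (((n - Δ) * Δ : ℕ) : ℝ) = (Δ : ℝ) * ((n : ℝ) - (Δ : ℝ)) := by
        push_cast [Nat.cast_sub hΔn]; ring
      calc 2 * eB + eX = ((2 * GB.edgeSet.ncard + GX.edgeSet.ncard : ℕ) : ℝ) := by
            rw [heB, heX]; push_cast; ring
        _ ≤ (((n - Δ) * Δ : ℕ) : ℝ) := by exact_mod_cast hmain
        _ = _ := hcast
    have hEAR : eA ≤ 2 * (n : ℝ) := by
      calc eA = ((GA.edgeSet.ncard : ℕ) : ℝ) := rfl
        _ ≤ ((2 * n : ℕ) : ℝ) := by exact_mod_cast hEA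
        _ = 2 * (n : ℝ) := by push_cast; ring
    have hedgesR : (Δ : ℝ) * ((n : ℝ) - (Δ : ℝ)) - (ε / 2) * (n : ℝ) ^ 2
        ≤ eA + eB + eX := by
      have : (G.edgeSet.ncard : ℝ) = eA + eB + eX := by
        rw [hGncard, heA, heB, heX]; push_cast; ring
      linarith [hedges, this.symm.le, this.le]
    have hn1 : (1 : ℝ) ≤ (n : ℝ) := by
      have : 1 ≤ n := le_trans (le_max_left _ _) hn
      exact_mod_cast this
    have h8 : (8 : ℝ) ≤ ε * (n : ℝ) := by
      have h1 : (⌈(8 : ℝ) / ε⌉₊ : ℕ) ≤ n := le_trans (le_max_right _ _) hn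
      have h2 : (8 : ℝ) / ε ≤ (n : ℝ) :=
        le_trans (Nat.le_ceil _) (by exact_mod_cast h1)
      calc (8 : ℝ) = ε * (8 / ε) := by field_simp
        _ ≤ ε * n := mul_le_mul_of_nonneg_left h2 (le_of_lt hε)
    have hcast2 : ((GA.edgeSet.ncard + GB.edgeSet.ncard : ℕ) : ℝ) = eA + eB := by
      rw [heA, heB]; push_cast; ring
    rw [hcast2]
    nlinarith [mul_le_mul_of_nonneg_right h8 (by linarith : (0:ℝ) ≤ (n:ℝ) / 2)]
  · -- colorability
    refine ⟨Coloring.mk (fun u => if u ∈ A then (0 : Fin 2) else 1) ?_⟩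
    intro u w huw
    rw [deleteEdges_adj] at huw
    obtain ⟨hG, hnot⟩ := huw
    by_cases hu : u ∈ A <;> by_cases hw : w ∈ A
    · exact absurd (((GA ⊔ GB).mem_edgeSet).mpr (Or.inl ⟨hG, hu, hw⟩)) hnot
    · simp [hu, hw]
    · simp [hu, hw]
    · exact absurd (((GA ⊔ GB).mem_edgeSet).mpr (Or.inr ⟨hG, hu, hw⟩)) hnot
end
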